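/- arXiv:0912.2737 — 4 statements merged into one kernel-verified Lean document; each statement's English description precedes it below -/
import Mathlib

section
/- Let dA be a positive integer and let S be a subspace of dA×dA complex matrices (identified with a subspace of ℂ^{dA} ⊗ ℂ^{dA}) such that: (a) S is strongly unextendible; (b) the Frobenius orthocomplement S^⊥ is strongly unextendible; (c) S is closed under conjugate transpose; (d) the set SX = {MX : M ∈ S} is closed under conjugate transpose; (e) S is spanned by positive semidefinite matrices; (f) the set S^⊥X = {NX : N ∈ S^⊥} is spanned by positive semidefinite matrices. Then there exist quantum channels E1, E2 with input dimension dA such that for every integer n ≥ 1, for i = 1,2, and all nonzero vectors ψ, φ in (ℂ^{dA})^{⊗n}, tr[E_i^{⊗n}(ψψᴴ) · E_i^{⊗n}(φφᴴ)] ≠ 0 (each channel has no zero-error classical capacity), while there exist nonzero vectors ψ, φ in ℂ^{dA} ⊗ ℂ^{dA} with tr[(E1 ⊗ E2)(ψψᴴ) · (E1 ⊗ E2)(φφᴴ)] = 0 (the joint channel has positive one-shot classical zero-error capacity). -/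
open Matrix
open scoped ComplexOrder

noncomputable section

/-- A family of Kraus operators for a quantum channel:
`∑ k, (A k)ᴴ * A k = 1` (trace preservation). -/
def IsKraus {ι m n : Type*} [Fintype ι] [Fintype m] [Fintype n] [DecidableEq m]
    (A : ι → Matrix n m ℂ) : Prop :=
  ∑ k, (A k)ᴴ * A k = 1

/-- Application of the channel with Kraus operators `A`: `ρ ↦ ∑ k, A k * ρ * (A k)ᴴ`. -/
def applyKraus {ι m n : Type*} [Fintype ι] [Fintype m]
    (A : ι → Matrix n m ℂ) (ρ : Matrix m m ℂ) : Matrix n n ℂ :=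
  ∑ k, A k * ρ * (A k)ᴴ

/-- Kraus operators of the `N`-th tensor power of a channel: all `N`-fold
Kronecker products of Kraus operators of the original channel. -/
def powKraus {κ a b : ℕ} (A : Fin κ → Matrix (Fin a) (Fin b) ℂ) (N : ℕ) :
    (Fin N → Fin κ) → Matrix (Fin N → Fin a) (Fin N → Fin b) ℂ :=
  fun f => Matrix.of fun i j => ∏ t, A (f t) (i t) (j t)

/-- Kraus operators of the tensor product of two channels: Kronecker products of
the Kraus operators of the two channels. -/
def jointKraus {κ₁ κ₂ a₁ b₁ a₂ b₂ : ℕ}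
    (A : Fin κ₁ → Matrix (Fin a₁) (Fin b₁) ℂ) (B : Fin κ₂ → Matrix (Fin a₂) (Fin b₂) ℂ) :
    Fin κ₁ × Fin κ₂ → Matrix (Fin a₁ × Fin a₂) (Fin b₁ × Fin b₂) ℂ :=
  fun k => Matrix.kroneckerMap (· * ·) (A k.1) (B k.2)

/-- The rank-one matrix `ψψᴴ` associated to a vector `ψ`. -/
def outer {α : Type*} (ψ : α → ℂ) : Matrix α α ℂ :=
  Matrix.vecMulVec ψ (star ψ)

/-- The channel with Kraus operators `A : ℂ^b → ℂ^a` has no zero-error classical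
capacity: for every `N ≥ 1` and all nonzero inputs `ψ, φ` to the `N`-th tensor power,
the outputs are non-orthogonal. -/
def NoZeroError {κ a b : ℕ} (A : Fin κ → Matrix (Fin a) (Fin b) ℂ) : Prop :=
  ∀ N : ℕ, 1 ≤ N → ∀ ψ φ : (Fin N → Fin b) → ℂ, ψ ≠ 0 → φ ≠ 0 →
    Matrix.trace (applyKraus (powKraus A N) (outer ψ) *
      applyKraus (powKraus A N) (outer φ)) ≠ 0

/-- Frobenius (Hilbert-Schmidt) inner product `⟨M, N⟩ = tr(Mᴴ N)`. -/
def frobInner {α β : Type*} [Fintype α] [Fintype β] (M N : Matrix α β ℂ) : ℂ :=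
  Matrix.trace (Mᴴ * N)

/-- Frobenius orthogonal complement of a set of matrices. -/
def frobOrthSet {α β : Type*} [Fintype α] [Fintype β] (S : Set (Matrix α β ℂ)) :
    Set (Matrix α β ℂ) :=
  {N | ∀ M ∈ S, frobInner M N = 0}

/-- `k`-fold Kronecker product of a family of matrices. -/
def kronPow {a b : ℕ} (k : ℕ) (M : Fin k → Matrix (Fin a) (Fin b) ℂ) :
    Matrix (Fin k → Fin a) (Fin k → Fin b) ℂ :=
  Matrix.of fun i j => ∏ t, M t (i t) (j t)

/-- A set `S` of `a×b` matrices is `k`-unextendible if no nonzero matrix of rank at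
most one (equivalently, no nonzero outer product `u vᵀ`) is Frobenius-orthogonal to
`S^{⊗k}`, i.e. to every `k`-fold Kronecker product of elements of `S`. -/
def KUnextendible {a b : ℕ} (S : Set (Matrix (Fin a) (Fin b) ℂ)) (k : ℕ) : Prop :=
  ∀ (u : (Fin k → Fin a) → ℂ) (v : (Fin k → Fin b) → ℂ), u ≠ 0 → v ≠ 0 →
    ∃ M : Fin k → Matrix (Fin a) (Fin b) ℂ, (∀ t, M t ∈ S) ∧
      frobInner (kronPow k M) (Matrix.vecMulVec u v) ≠ 0

/-- A set of matrices is strongly unextendible if it is `k`-unextendible for all `k ≥ 1`. -/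
def StronglyUnextendible {a b : ℕ} (S : Set (Matrix (Fin a) (Fin b) ℂ)) : Prop :=
  ∀ k : ℕ, 1 ≤ k → KUnextendible S k

/-- The `n×n` matrix with ones on the anti-diagonal and zeros elsewhere. -/
def Xmat (n : ℕ) : Matrix (Fin n) (Fin n) ℂ :=
  Matrix.of fun i j => if (i : ℕ) + (j : ℕ) = n - 1 then 1 else 0

section AuxLemmas

lemma kronPow_mul {a b c k : ℕ} (M : Fin k → Matrix (Fin a) (Fin b) ℂ)
    (N : Fin k → Matrix (Fin b) (Fin c) ℂ) :
    kronPow k M * kronPow k N = kronPow k (fun t => M t * N t) := by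
  ext i j
  simp only [Matrix.mul_apply, kronPow, Matrix.of_apply]
  conv_rhs => rw [Fintype.prod_sum (fun t y => M t (i t) y * N t y (j t))]
  exact Finset.sum_congr rfl fun x _ => (Finset.prod_mul_distrib).symm

lemma kronPow_conjTranspose {a b k : ℕ} (M : Fin k → Matrix (Fin a) (Fin b) ℂ) :
    (kronPow k M)ᴴ = kronPow k (fun t => (M t)ᴴ) := by
  ext i j
  simp only [conjTranspose_apply, kronPow, Matrix.of_apply, star_prod]

lemma kronPow_one {a k : ℕ} :
    kronPow k (fun _ => (1 : Matrix (Fin a) (Fin a) ℂ)) = 1 := by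
  ext i j
  simp only [kronPow, Matrix.of_apply, Matrix.one_apply]
  by_cases h : i = j
  · subst h; simp
  · have : ∃ t, i t ≠ j t := by
      by_contra hc
      push_neg at hc
      exact h (funext hc)
    obtain ⟨t, ht⟩ := this
    rw [if_neg h]
    exact Finset.prod_eq_zero (Finset.mem_univ t) (by simp [Matrix.one_apply, ht])

lemma kronPow_map_star {a b k : ℕ} (M : Fin k → Matrix (Fin a) (Fin b) ℂ) :
    kronPow k (fun t => (M t).map star) = (kronPow k M).map star := by
  ext i j
  simp only [kronPow, Matrix.of_apply, Matrix.map_apply, star_prod]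

lemma star_mulVec_dot {n m p : Type*} [Fintype n] [Fintype m] [Fintype p]
    (K : Matrix n m ℂ) (L : Matrix n p ℂ) (x : m → ℂ) (y : p → ℂ) :
    star (K.mulVec x) ⬝ᵥ L.mulVec y = star x ⬝ᵥ (Kᴴ * L).mulVec y := by
  simp [star_mulVec, dotProduct_mulVec, vecMul_vecMul]

lemma frobInner_vecMulVec {α β : Type*} [Fintype α] [Fintype β]
    (A : Matrix α β ℂ) (u : α → ℂ) (v : β → ℂ) :
    frobInner A (vecMulVec u v) = star (star u ⬝ᵥ A.mulVec (star v)) := by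
  simp only [frobInner, Matrix.trace, Matrix.diag, Matrix.mul_apply,
    conjTranspose_apply, vecMulVec_apply, dotProduct, mulVec, star_sum, star_mul',
    Pi.star_apply, star_star]
  rw [Finset.sum_comm]
  exact Finset.sum_congr rfl fun j _ => by
    rw [Finset.mul_sum]
    exact Finset.sum_congr rfl fun i _ => by ring

lemma outer_conj_mul {n m : Type*} [Fintype n] [Fintype m]
    (M : Matrix n m ℂ) (ψ : m → ℂ) :
    M * outer ψ * Mᴴ = outer (M.mulVec ψ) := by
  ext i j
  simp only [outer, Matrix.mul_apply, vecMulVec_apply, conjTranspose_apply,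
    Pi.star_apply, mulVec, dotProduct, star_sum, star_mul', star_star, Finset.mul_sum,
    Finset.sum_mul]
  exact Finset.sum_congr rfl fun a _ => Finset.sum_congr rfl fun b _ => by ring

lemma trace_outer_mul_outer {n : Type*} [Fintype n] (u v : n → ℂ) :
    Matrix.trace (outer u * outer v) = (star u ⬝ᵥ v) * star (star u ⬝ᵥ v) := by
  have h : star (star u ⬝ᵥ v) = star v ⬝ᵥ u := by
    simp only [dotProduct, star_sum, star_mul', star_star, Pi.star_apply]
    exact Finset.sum_congr rfl fun i _ => by ring
  rw [h]
  simp only [Matrix.trace, Matrix.diag, Matrix.mul_apply, outer, vecMulVec_apply,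
    dotProduct, Pi.star_apply, Finset.sum_mul, Finset.mul_sum]
  exact Finset.sum_congr rfl fun j _ => Finset.sum_congr rfl fun i _ => by ring

/-- Trace formula. -/
lemma trace_applyKraus_outer {ι m n : Type*} [Fintype ι] [Fintype m] [Fintype n]
    (C : ι → Matrix n m ℂ) (ψ φ : m → ℂ) :
    Matrix.trace (applyKraus C (outer ψ) * applyKraus C (outer φ)) =
      ∑ k, ∑ l, (star ((C k).mulVec ψ) ⬝ᵥ (C l).mulVec φ) *
        star (star ((C k).mulVec ψ) ⬝ᵥ (C l).mulVec φ) := by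
  have h1 : applyKraus C (outer ψ) = ∑ k, outer ((C k).mulVec ψ) := by
    unfold applyKraus
    exact Finset.sum_congr rfl fun k _ => outer_conj_mul _ _
  have h2 : applyKraus C (outer φ) = ∑ l, outer ((C l).mulVec φ) := by
    unfold applyKraus
    exact Finset.sum_congr rfl fun l _ => outer_conj_mul _ _
  rw [h1, h2, Finset.sum_mul_sum, Matrix.trace_sum]
  exact Finset.sum_congr rfl fun k _ => by
    rw [Matrix.trace_sum]
    exact Finset.sum_congr rfl fun l _ => trace_outer_mul_outer _ _

lemma dot_kronPow_span_zero {dA r k : ℕ} (P : Fin r → Matrix (Fin dA) (Fin dA) ℂ)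
    (M : Fin k → Matrix (Fin dA) (Fin dA) ℂ)
    (hM : ∀ t, M t ∈ Submodule.span ℂ (Set.range P))
    (x y : (Fin k → Fin dA) → ℂ)
    (h : ∀ F : Fin k → Fin r, star x ⬝ᵥ (kronPow k (fun t => P (F t))).mulVec y = 0) :
    star x ⬝ᵥ (kronPow k M).mulVec y = 0 := by
  have hM' : ∀ t, ∃ c : Fin r → ℂ, ∑ α, c α • P α = M t := by
    intro t
    exact (Submodule.mem_span_range_iff_exists_fun ℂ).mp (hM t)
  choose c hc using hM'
  have hexp : kronPow k M = ∑ F : Fin k → Fin r,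
      (∏ t, c t (F t)) • kronPow k (fun t => P (F t)) := by
    ext i j
    have hent : ∀ t, M t (i t) (j t) = ∑ α, c t α * P α (i t) (j t) := by
      intro t
      rw [← hc t]
      simp [Matrix.sum_apply]
    simp only [kronPow, Matrix.of_apply, Matrix.sum_apply, Matrix.smul_apply,
      smul_eq_mul]
    rw [Finset.prod_congr rfl fun t _ => hent t,
      Fintype.prod_sum (fun t α => c t α * P α (i t) (j t))]
    exact Finset.sum_congr rfl fun F _ => by rw [Finset.prod_mul_distrib]
  have hmv : (∑ F : Fin k → Fin r, (∏ t, c t (F t)) • kronPow k fun t => P (F t)) *ᵥ y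
      = ∑ F : Fin k → Fin r, ((∏ t, c t (F t)) • kronPow k fun t => P (F t)) *ᵥ y := by
    ext i
    simp only [Matrix.mulVec, dotProduct, Matrix.sum_apply, Finset.sum_apply,
      Finset.sum_mul]
    rw [Finset.sum_comm]
  have hds : star x ⬝ᵥ (∑ F : Fin k → Fin r,
      ((∏ t, c t (F t)) • kronPow k fun t => P (F t)) *ᵥ y)
      = ∑ F : Fin k → Fin r,
        star x ⬝ᵥ (((∏ t, c t (F t)) • kronPow k fun t => P (F t)) *ᵥ y) := by
    simp only [dotProduct, Finset.sum_apply, Finset.mul_sum]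
    exact Finset.sum_comm
  rw [hexp, hmv, hds]
  refine Finset.sum_eq_zero fun F _ => ?_
  rw [Matrix.smul_mulVec, dotProduct_smul, h F, smul_zero]


lemma sum_mul_star_eq_zero_iff {ι : Type*} [Fintype ι] (q : ι → ℂ) :
    ∑ k, q k * star (q k) = 0 ↔ ∀ k, q k = 0 := by
  have h : ∑ k, q k * star (q k) = ((∑ k, Complex.normSq (q k) : ℝ) : ℂ) := by
    push_cast
    exact Finset.sum_congr rfl fun k _ => (Complex.mul_conj (q k))
  constructor
  · intro h0
    rw [h] at h0
    have h1 := Complex.ofReal_eq_zero.mp h0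
    intro k
    have hk := (Finset.sum_eq_zero_iff_of_nonneg
      (fun i _ => Complex.normSq_nonneg (q i))).mp h1 k (Finset.mem_univ k)
    exact Complex.normSq_eq_zero.mp hk
  · intro h0; exact Finset.sum_eq_zero fun k _ => by rw [h0 k, zero_mul]

lemma dot_sum_mulVec {ι n m : Type*} [Fintype ι] [Fintype n] [Fintype m]
    (x : n → ℂ) (A : ι → Matrix n m ℂ) (y : m → ℂ) :
    star x ⬝ᵥ (∑ i, A i).mulVec y = ∑ i, star x ⬝ᵥ (A i).mulVec y := by
  have h1 : (∑ i, A i).mulVec y = ∑ i, (A i).mulVec y := by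
    ext n
    simp only [Matrix.mulVec, dotProduct, Matrix.sum_apply, Finset.sum_apply,
      Finset.sum_mul]
    exact Finset.sum_comm
  rw [h1]
  simp only [dotProduct, Finset.sum_apply, Finset.mul_sum]
  exact Finset.sum_comm

lemma mulVec_ne_zero_of_left_inv {n : Type*} [Fintype n] [DecidableEq n]
    {A B : Matrix n n ℂ} (hBA : B * A = 1) {x : n → ℂ} (hx : x ≠ 0) :
    A.mulVec x ≠ 0 := by
  intro h
  apply hx
  have : (B * A).mulVec x = 0 := by
    rw [← Matrix.mulVec_mulVec, h, Matrix.mulVec_zero]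
  rwa [hBA, Matrix.one_mulVec] at this

lemma span_mulVec_zero {dA r : ℕ} (P : Fin r → Matrix (Fin dA) (Fin dA) ℂ)
    (x : Fin dA → ℂ) (hP : ∀ i, (P i).mulVec x = 0)
    {M : Matrix (Fin dA) (Fin dA) ℂ} (hM : M ∈ Submodule.span ℂ (Set.range P)) :
    M.mulVec x = 0 := by
  induction hM using Submodule.span_induction with
  | mem M hMem => obtain ⟨i, rfl⟩ := hMem; exact hP i
  | zero => simp [Matrix.zero_mulVec]
  | add a b _ _ ha hb => rw [Matrix.add_mulVec, ha, hb, add_zero]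
  | smul c a _ ha => rw [Matrix.smul_mulVec, ha, smul_zero]

lemma conj_mul_conj {n m p : Type*} [Fintype n] [Fintype m] [Fintype p]
    (M : Matrix n m ℂ) (N : Matrix n p ℂ) :
    (M.map star)ᴴ * (N.map star) = (Mᴴ * N).map star := by
  ext i j
  simp only [Matrix.mul_apply, Matrix.map_apply, conjTranspose_apply, star_star,
    star_sum, star_mul', Pi.star_apply]

lemma map_star_transpose {n m : Type*} (M : Matrix n m ℂ) :
    (M.map star)ᵀ = Mᴴ := rfl

lemma dot_map_star {α β : Type*} [Fintype α] [Fintype β]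
    (Z : Matrix α β ℂ) (x : α → ℂ) (y : β → ℂ) :
    star x ⬝ᵥ (Z.map star).mulVec y = star (star (star x) ⬝ᵥ Z.mulVec (star y)) := by
  simp only [dotProduct, Matrix.mulVec, dotProduct, Matrix.map_apply, star_sum,
    star_mul', star_star, Pi.star_apply, Finset.mul_sum]

lemma kronecker_conjTranspose {n m p q : Type*}
    (M : Matrix n m ℂ) (N : Matrix p q ℂ) :
    (Matrix.kroneckerMap (· * ·) M N)ᴴ = Matrix.kroneckerMap (· * ·) Mᴴ Nᴴ := by
  ext i j
  simp only [conjTranspose_apply, Matrix.kroneckerMap_apply, star_mul']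

lemma noZeroError_of_graph {dA r n₁ : ℕ} (G : Fin r → Matrix (Fin dA) (Fin dA) ℂ)
    (A : Fin r → Matrix (Fin n₁) (Fin dA) ℂ)
    (hA : ∀ k, (A k)ᴴ * A k = G k)
    (hT : ∀ (N : ℕ), 1 ≤ N → ∀ (x y : (Fin N → Fin dA) → ℂ), x ≠ 0 → y ≠ 0 →
      (∀ F : Fin N → Fin r, star x ⬝ᵥ (kronPow N (fun t => G (F t))).mulVec y = 0) →
        False) :
    NoZeroError A := by
  intro N hN ψ φ hψ hφ htr
  rw [trace_applyKraus_outer] at htr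
  have htr2 : ∑ p : (Fin N → Fin r) × (Fin N → Fin r),
      (star (powKraus A N p.1 *ᵥ ψ) ⬝ᵥ powKraus A N p.2 *ᵥ φ) *
      star (star (powKraus A N p.1 *ᵥ ψ) ⬝ᵥ powKraus A N p.2 *ᵥ φ) = 0 := by
    rw [Fintype.sum_prod_type]; exact htr
  have hall := (sum_mul_star_eq_zero_iff _).mp htr2
  apply hT N hN ψ φ hψ hφ
  intro F
  have hFF := hall (F, F)
  simp only at hFF
  have hpow : powKraus A N F = kronPow N (fun t => A (F t)) := rfl
  rw [hpow, star_mulVec_dot, kronPow_conjTranspose, kronPow_mul] at hFF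
  simp only [hA] at hFF
  exact hFF

def blockOp {r dA : ℕ} (E : Fin r → Matrix (Fin dA) (Fin dA) ℂ) (k : Fin r) :
    Matrix (Fin (r * dA)) (Fin dA) ℂ :=
  Matrix.of fun i j =>
    if (finProdFinEquiv.symm i).1 = k then E k (finProdFinEquiv.symm i).2 j else 0

lemma blockOp_graph {r dA : ℕ} (E : Fin r → Matrix (Fin dA) (Fin dA) ℂ) (k l : Fin r) :
    (blockOp E k)ᴴ * blockOp E l = if k = l then (E k)ᴴ * E l else 0 := by
  ext a b
  rw [Matrix.mul_apply]
  rw [← Equiv.sum_comp finProdFinEquiv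
    (fun i => ((blockOp E k)ᴴ) a i * (blockOp E l) i b)]
  simp only [blockOp, conjTranspose_apply, Matrix.of_apply, Equiv.symm_apply_apply,
    apply_ite (star : ℂ → ℂ), star_zero]
  rw [Fintype.sum_prod_type]
  rw [Finset.sum_eq_single k (fun α _ hα => Finset.sum_eq_zero fun t _ => by
    rw [if_neg hα, zero_mul]) (fun h => absurd (Finset.mem_univ k) h)]
  by_cases hkl : k = l
  · subst hkl
    simp [Matrix.mul_apply]
  · simp [if_neg hkl, if_neg (Ne.symm hkl)]

lemma Xmat_apply_rev {n : ℕ} (i j : Fin n) :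
    Xmat n i j = if j = Fin.rev i then 1 else 0 := by
  have h : ((i : ℕ) + (j : ℕ) = n - 1) ↔ j = Fin.rev i := by
    rw [Fin.ext_iff, Fin.val_rev]
    have h1 := i.isLt
    have h2 := j.isLt
    omega
  simp only [Xmat, Matrix.of_apply]
  exact if_congr h rfl rfl

lemma Xmat_mul_self {n : ℕ} : Xmat n * Xmat n = 1 := by
  ext i k
  rw [Matrix.mul_apply]
  rw [Finset.sum_eq_single (Fin.rev i) (fun j _ hj => by
    rw [Xmat_apply_rev, if_neg hj, zero_mul])
    (fun h => absurd (Finset.mem_univ _) h)]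
  rw [Xmat_apply_rev, Xmat_apply_rev, if_pos rfl, Fin.rev_rev, Matrix.one_apply]
  by_cases h : k = i
  · subst h; simp
  · rw [if_neg h, if_neg (Ne.symm h), one_mul]

lemma Xmat_conjTranspose {n : ℕ} : (Xmat n)ᴴ = Xmat n := by
  ext i j
  simp only [conjTranspose_apply, Xmat, Matrix.of_apply, apply_ite (star : ℂ → ℂ),
    star_one, star_zero]
  exact if_congr (by omega) rfl rfl

lemma Xmat_ne_zero {n : ℕ} (hn : 0 < n) : Xmat n ≠ 0 := by
  intro h
  have := congrFun (congrFun h ⟨0, hn⟩) (Fin.rev ⟨0, hn⟩)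
  rw [Xmat_apply_rev, if_pos rfl, Matrix.zero_apply] at this
  exact one_ne_zero this

lemma sum_comm3 {M : Type*} [AddCommMonoid M] {n : Type*} [Fintype n]
    (g : n → n → n → M) :
    ∑ i, ∑ a, ∑ b, g i a b = ∑ b, ∑ a, ∑ i, g i a b := by
  rw [Finset.sum_comm]
  exact Eq.trans (Finset.sum_congr rfl fun a _ => Finset.sum_comm) Finset.sum_comm

lemma dot_kron {dA : ℕ} (M N P₀ Q₀ : Matrix (Fin dA) (Fin dA) ℂ) :
    star (fun p : Fin dA × Fin dA => P₀ p.1 p.2) ⬝ᵥ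
      ((Matrix.kroneckerMap (· * ·) M N).mulVec (fun p => Q₀ p.1 p.2)) =
      Matrix.trace (P₀ᴴ * M * Q₀ * Nᵀ) := by
  simp only [Matrix.trace, Matrix.diag, Matrix.mul_apply, conjTranspose_apply,
    Matrix.transpose_apply, dotProduct, Matrix.mulVec, Matrix.kroneckerMap_apply,
    Fintype.sum_prod_type, Pi.star_apply, Finset.sum_mul, Finset.mul_sum]
  -- LHS: ∑ i ∑ j ∑ a ∑ b star (P₀ i j) * (M i a * N j b * Q₀ a b)
  -- RHS: ∑ j ∑ b ∑ a ∑ i star (P₀ i j) * M i a * Q₀ a b * N j b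
  rw [Finset.sum_comm]
  refine Finset.sum_congr rfl fun j _ => ?_
  rw [sum_comm3]
  refine Finset.sum_congr rfl fun b _ => ?_
  refine Finset.sum_congr rfl fun a _ => Finset.sum_congr rfl fun i _ => by ring

lemma ker_contra {dA : ℕ} (hd : 0 < dA) (S0 : Set (Matrix (Fin dA) (Fin dA) ℂ))
    (hk : KUnextendible S0 1) (x : Fin dA → ℂ) (hx : x ≠ 0)
    (h : ∀ M ∈ S0, M.mulVec x = 0) : False := by
  have hu : (fun _ : Fin 1 → Fin dA => (1 : ℂ)) ≠ 0 := by
    intro hc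
    exact one_ne_zero (congrFun hc (fun _ => ⟨0, hd⟩))
  have hxj : ∃ j₀, x j₀ ≠ 0 := by
    by_contra hc
    push_neg at hc
    exact hx (funext hc)
  obtain ⟨j₀, hj₀⟩ := hxj
  have hv : (fun j : Fin 1 → Fin dA => star (x (j 0))) ≠ 0 := by
    intro hc
    have := congrFun hc (fun _ => j₀)
    simp only [Pi.zero_apply, star_eq_zero] at this
    exact hj₀ this
  obtain ⟨M, hMS, hfrob⟩ := hk _ _ hu hv
  apply hfrob
  rw [frobInner_vecMulVec]
  have hmv : (kronPow 1 M).mulVec (star fun j : Fin 1 → Fin dA => star (x (j 0))) = 0 := by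
    ext i
    simp only [Matrix.mulVec, dotProduct, kronPow, Matrix.of_apply, Pi.star_apply,
      star_star, Fin.prod_univ_one]
    rw [← Equiv.sum_comp (Equiv.funUnique (Fin 1) (Fin dA)).symm
      (fun j => M 0 (i 0) (j 0) * x (j 0))]
    have := congrFun (h (M 0) (hMS 0)) (i 0)
    simpa [Matrix.mulVec, dotProduct] using this
  rw [hmv]
  simp

lemma exists_fin_family_span {V : Type*} [AddCommGroup V] [Module ℂ V]
    [FiniteDimensional ℂ V] (T : Set V) :
    ∃ (r : ℕ) (P : Fin r → V), (∀ i, P i ∈ T) ∧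
      Submodule.span ℂ T ≤ Submodule.span ℂ (Set.range P) := by
  classical
  set S := Submodule.span ℂ T with hS
  have b := Module.finBasis ℂ S
  have hmem : ∀ i, ((b i : S) : V) ∈ Submodule.span ℂ T := fun i => (b i).2
  have hrep : ∀ i, ∃ (n : ℕ) (f : Fin n → ℂ) (g : Fin n → T),
      ∑ t, f t • (g t : V) = ((b i : S) : V) := fun i => Submodule.mem_span_set'.mp (hmem i)
  choose n f g hfg using hrep
  let σ := Σ i : Fin (Module.finrank ℂ S), Fin (n i)
  let e : σ ≃ Fin (Fintype.card σ) := Fintype.equivFin σ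
  refine ⟨Fintype.card σ, fun j => ((g (e.symm j).1 (e.symm j).2 : V)), fun j =>
    (g (e.symm j).1 (e.symm j).2).2, ?_⟩
  have hb : ∀ i, ((b i : S) : V) ∈
      Submodule.span ℂ (Set.range (fun j => ((g (e.symm j).1 (e.symm j).2 : V)))) := by
    intro i
    rw [← hfg i]
    refine Submodule.sum_mem _ fun t _ => Submodule.smul_mem _ _ (Submodule.subset_span ?_)
    exact ⟨e ⟨i, t⟩, congrArg (fun p : σ => ((g p.1 p.2 : V))) (Equiv.symm_apply_apply e ⟨i, t⟩)⟩
  have hSeq : S = Submodule.span ℂ (Set.range (fun i => ((b i : S) : V))) := by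
    conv_lhs => rw [← Submodule.map_subtype_top S, ← b.span_eq, Submodule.map_span]
    congr 1
    ext v
    simp [Set.range_comp]
  refine le_trans (le_of_eq hSeq) (Submodule.span_le.mpr ?_)
  rintro v ⟨i, rfl⟩
  exact hb i

lemma transfer1 {dA r : ℕ} (S0 : Set (Matrix (Fin dA) (Fin dA) ℂ))
    (P : Fin r → Matrix (Fin dA) (Fin dA) ℂ)
    (W B : Matrix (Fin dA) (Fin dA) ℂ) (hBW : B * W = 1)
    (hsu : StronglyUnextendible S0)
    (hspan : ∀ M ∈ S0, M ∈ Submodule.span ℂ (Set.range P))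
    (N : ℕ) (hN : 1 ≤ N) (x y : (Fin N → Fin dA) → ℂ) (hx : x ≠ 0) (hy : y ≠ 0)
    (hq : ∀ F : Fin N → Fin r,
      star x ⬝ᵥ (kronPow N (fun t => Wᴴ * P (F t) * W)).mulVec y = 0) : False := by
  set Kw := kronPow N (fun _ => W) with hKw
  have hKinv : kronPow N (fun _ => B) * Kw = 1 := by
    rw [hKw, kronPow_mul]
    simp only [hBW]
    exact kronPow_one
  set x' := Kw.mulVec x with hx'def
  set y' := Kw.mulVec y with hy'def
  have hx' : x' ≠ 0 := mulVec_ne_zero_of_left_inv hKinv hx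
  have hy' : y' ≠ 0 := mulVec_ne_zero_of_left_inv hKinv hy
  have hq' : ∀ F : Fin N → Fin r,
      star x' ⬝ᵥ (kronPow N (fun t => P (F t))).mulVec y' = 0 := by
    intro F
    have h1 := hq F
    have h2 : kronPow N (fun t => Wᴴ * P (F t) * W) =
        Kwᴴ * (kronPow N (fun t => P (F t)) * Kw) := by
      rw [hKw, kronPow_conjTranspose, kronPow_mul, kronPow_mul]
      simp only [Matrix.mul_assoc]
    rw [h2, ← star_mulVec_dot, ← hx'def] at h1
    rwa [← Matrix.mulVec_mulVec, ← hy'def] at h1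
  obtain ⟨M, hM, hfrob⟩ := hsu N hN x' (star y') hx' (by simpa using hy')
  apply hfrob
  rw [frobInner_vecMulVec, star_star]
  rw [dot_kronPow_span_zero P M (fun t => hspan _ (hM t)) x' y' hq']
  exact star_zero _

lemma transfer2 {dA s : ℕ} (S0 : Set (Matrix (Fin dA) (Fin dA) ℂ))
    (R : Fin s → Matrix (Fin dA) (Fin dA) ℂ)
    (V B : Matrix (Fin dA) (Fin dA) ℂ) (hBV : B * V = 1)
    (hsu : StronglyUnextendible S0)
    (hspan : ∀ K ∈ S0, K * Xmat dA ∈ Submodule.span ℂ (Set.range R))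
    (N : ℕ) (hN : 1 ≤ N) (x y : (Fin N → Fin dA) → ℂ) (hx : x ≠ 0) (hy : y ≠ 0)
    (hq : ∀ F : Fin N → Fin s,
      star x ⬝ᵥ (kronPow N (fun t => Vᴴ * R (F t) * V)).mulVec y = 0) : False := by
  set Kv := kronPow N (fun _ => V) with hKv
  have hKinv : kronPow N (fun _ => B) * Kv = 1 := by
    rw [hKv, kronPow_mul]
    simp only [hBV]
    exact kronPow_one
  set x' := Kv.mulVec x with hx'def
  set y' := Kv.mulVec y with hy'def
  have hx' : x' ≠ 0 := mulVec_ne_zero_of_left_inv hKinv hx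
  have hy' : y' ≠ 0 := mulVec_ne_zero_of_left_inv hKinv hy
  have hq' : ∀ F : Fin N → Fin s,
      star x' ⬝ᵥ (kronPow N (fun t => R (F t))).mulVec y' = 0 := by
    intro F
    have h1 := hq F
    have h2 : kronPow N (fun t => Vᴴ * R (F t) * V) =
        Kvᴴ * (kronPow N (fun t => R (F t)) * Kv) := by
      rw [hKv, kronPow_conjTranspose, kronPow_mul, kronPow_mul]
      simp only [Matrix.mul_assoc]
    rw [h2, ← star_mulVec_dot, ← hx'def] at h1
    rwa [← Matrix.mulVec_mulVec, ← hy'def] at h1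
  set Kx := kronPow N (fun _ => Xmat dA) with hKx
  have hKxinv : Kx * Kx = 1 := by
    rw [hKx, kronPow_mul]
    simp only [Xmat_mul_self]
    exact kronPow_one
  set y₂ := Kx.mulVec y' with hy₂def
  have hy₂ : y₂ ≠ 0 := mulVec_ne_zero_of_left_inv hKxinv hy'
  obtain ⟨K, hK, hfrob⟩ := hsu N hN x' (star y₂) hx' (by simpa using hy₂)
  apply hfrob
  rw [frobInner_vecMulVec, star_star]
  have h3 : (kronPow N K).mulVec y₂ =
      (kronPow N (fun t => K t * Xmat dA)).mulVec y' := by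
    rw [hy₂def, Matrix.mulVec_mulVec, ← kronPow_mul, hKx]
  rw [h3]
  rw [dot_kronPow_span_zero R (fun t => K t * Xmat dA)
    (fun t => hspan _ (hK t)) x' y' hq']
  exact star_zero _

lemma exists_factor_of_psd_family {dA r : ℕ}
    (P : Fin r → Matrix (Fin dA) (Fin dA) ℂ) (hpsd : ∀ i, (P i).PosSemidef)
    (hker : ∀ x : Fin dA → ℂ, x ≠ 0 → (∀ i, (P i).mulVec x = 0) → False) :
    ∃ B : Matrix (Fin dA) (Fin dA) ℂ, (∑ i, P i) = Bᴴ * B ∧ IsUnit B.det := by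
  have hsum : (∑ i, P i).PosSemidef :=
    Finset.sum_induction P _ (fun a b ha hb => ha.add hb)
      (Matrix.PosSemidef.zero) (fun i _ => hpsd i)
  obtain ⟨B, hB⟩ := by open scoped MatrixOrder in exact CStarAlgebra.nonneg_iff_eq_star_mul_self.mp hsum.nonneg
  refine ⟨B, hB, ?_⟩
  rw [isUnit_iff_ne_zero]
  intro hdet
  have hdetsum : (∑ i, P i).det = 0 := by
    rw [hB, Matrix.det_mul, hdet, mul_zero]
  obtain ⟨x, hx0, hx⟩ := Matrix.exists_mulVec_eq_zero_iff.mpr hdetsum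
  apply hker x hx0
  intro i
  have hdz : star x ⬝ᵥ (∑ j, P j).mulVec x = 0 := by rw [hx, dotProduct_zero]
  rw [dot_sum_mulVec] at hdz
  have hz := (Finset.sum_eq_zero_iff_of_nonneg
    (fun j _ => (hpsd j).dotProduct_mulVec_nonneg x)).mp hdz i (Finset.mem_univ i)
  exact ((hpsd i).dotProduct_mulVec_zero_iff x).mp hz

end AuxLemmas

/-- **Sufficient conditions for superactivation of the classical zero-error capacity
(Theorem 1 of the paper).**  If a subspace `S` of `dA×dA` matrices and its Frobenius
orthocomplement are both strongly unextendible, `S` and `SX` are closed under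
conjugate transpose, and `S` and `S^⊥X` are spanned by positive semidefinite
matrices, then there exist channels `E1, E2` with input dimension `dA`, each with no
zero-error classical capacity, while the joint channel `E1 ⊗ E2` has two nonzero
input vectors producing orthogonal outputs (positive one-shot classical zero-error
capacity). -/
theorem sufficient_conditions_for_classical_zero_error_superactivation
    (dA : ℕ) (hdA : 0 < dA) (S : Submodule ℂ (Matrix (Fin dA) (Fin dA) ℂ))
    (ha : StronglyUnextendible (S : Set (Matrix (Fin dA) (Fin dA) ℂ)))
    (hb : StronglyUnextendible (frobOrthSet (S : Set (Matrix (Fin dA) (Fin dA) ℂ))))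
    (hc : ∀ M ∈ S, Mᴴ ∈ S)
    (hd : ∀ A ∈ (fun M => M * Xmat dA) '' (S : Set (Matrix (Fin dA) (Fin dA) ℂ)),
      Aᴴ ∈ (fun M => M * Xmat dA) '' (S : Set (Matrix (Fin dA) (Fin dA) ℂ)))
    (he : ∃ T : Set (Matrix (Fin dA) (Fin dA) ℂ),
      (∀ M ∈ T, M.PosSemidef) ∧ Submodule.span ℂ T = S)
    (hf : ∃ T : Set (Matrix (Fin dA) (Fin dA) ℂ),
      (∀ M ∈ T, M.PosSemidef) ∧
      (Submodule.span ℂ T : Set (Matrix (Fin dA) (Fin dA) ℂ)) =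
        (fun N => N * Xmat dA) '' frobOrthSet (S : Set (Matrix (Fin dA) (Fin dA) ℂ))) :
    ∃ (n₁ n₂ κ₁ κ₂ : ℕ) (A1 : Fin κ₁ → Matrix (Fin n₁) (Fin dA) ℂ)
      (A2 : Fin κ₂ → Matrix (Fin n₂) (Fin dA) ℂ),
      IsKraus A1 ∧ IsKraus A2 ∧ NoZeroError A1 ∧ NoZeroError A2 ∧
      ∃ ψ φ : (Fin dA × Fin dA) → ℂ, ψ ≠ 0 ∧ φ ≠ 0 ∧
        Matrix.trace (applyKraus (jointKraus A1 A2) (outer ψ) *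
          applyKraus (jointKraus A1 A2) (outer φ)) = 0 := by
  classical
  -- finite spanning families of PSD matrices
  obtain ⟨T1, hT1psd, hT1span⟩ := he
  obtain ⟨T2, hT2psd, hT2span⟩ := hf
  obtain ⟨r, P, hPT1, hPle0⟩ := exists_fin_family_span T1
  obtain ⟨s, R, hRT2, hRle0⟩ := exists_fin_family_span T2
  rw [hT1span] at hPle0
  have hPle : ∀ M ∈ (S : Set (Matrix (Fin dA) (Fin dA) ℂ)),
      M ∈ Submodule.span ℂ (Set.range P) := fun M hM => hPle0 hM
  have hRle : ∀ K ∈ frobOrthSet (S : Set (Matrix (Fin dA) (Fin dA) ℂ)),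
      K * Xmat dA ∈ Submodule.span ℂ (Set.range R) := by
    intro K hK
    apply hRle0
    have h1 : K * Xmat dA ∈ (Submodule.span ℂ T2 : Set (Matrix (Fin dA) (Fin dA) ℂ)) := by
      rw [hT2span]
      exact ⟨K, hK, rfl⟩
    exact h1
  have hPpsd : ∀ i, (P i).PosSemidef := fun i => hT1psd _ (hPT1 i)
  have hPS : ∀ i, P i ∈ S := fun i => by
    have h1 := Submodule.subset_span (R := ℂ) (hPT1 i)
    rwa [hT1span] at h1
  have hRpsd : ∀ i, (R i).PosSemidef := fun i => hT2psd _ (hRT2 i)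
  have hRX : ∀ i, (R i) ∈ (fun N => N * Xmat dA) ''
      frobOrthSet (S : Set (Matrix (Fin dA) (Fin dA) ℂ)) := fun i => by
    have h1 : R i ∈ (Submodule.span ℂ T2 : Set (Matrix (Fin dA) (Fin dA) ℂ)) :=
      Submodule.subset_span (hRT2 i)
    rwa [hT2span] at h1
  -- closure of S under conjugation by X
  have hXMX : ∀ M ∈ S, Xmat dA * Mᴴ * Xmat dA ∈ S := by
    intro M hM
    obtain ⟨M', hM', hM'X⟩ := hd (M * Xmat dA) ⟨M, hM, rfl⟩
    have h3 : (M * Xmat dA)ᴴ = Xmat dA * Mᴴ := by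
      rw [conjTranspose_mul, Xmat_conjTranspose]
    have hM'X2 : M' * Xmat dA = (M * Xmat dA)ᴴ := hM'X
    have h4 : M' = Xmat dA * Mᴴ * Xmat dA := by
      have h5 : M' * Xmat dA * Xmat dA = Xmat dA * Mᴴ * Xmat dA := by
        rw [hM'X2, h3]
      rwa [Matrix.mul_assoc, Xmat_mul_self, Matrix.mul_one] at h5
    rw [← h4]
    exact hM'
  have hXSX : ∀ M ∈ S, Xmat dA * M * Xmat dA ∈ S := by
    intro M hM
    have h1 := hXMX Mᴴ (hc M hM)
    rwa [conjTranspose_conjTranspose] at h1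
  -- kernel triviality
  have hkerP : ∀ x : Fin dA → ℂ, x ≠ 0 → (∀ i, (P i).mulVec x = 0) → False := by
    intro x hx h
    apply ker_contra hdA (S : Set (Matrix (Fin dA) (Fin dA) ℂ)) (ha 1 le_rfl) x hx
    intro M hM
    exact span_mulVec_zero P x h (hPle M hM)
  have hkerR : ∀ x : Fin dA → ℂ, x ≠ 0 → (∀ i, (R i).mulVec x = 0) → False := by
    intro x hx h
    have hXx : (Xmat dA).mulVec x ≠ 0 := mulVec_ne_zero_of_left_inv Xmat_mul_self hx
    apply ker_contra hdA (frobOrthSet (S : Set (Matrix (Fin dA) (Fin dA) ℂ)))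
      (hb 1 le_rfl) _ hXx
    intro K hK
    have h1 : (K * Xmat dA).mulVec x = 0 := span_mulVec_zero R x h (hRle K hK)
    rw [Matrix.mulVec_mulVec]
    exact h1
  -- factorizations
  obtain ⟨B1, hB1, hB1det⟩ := exists_factor_of_psd_family P hPpsd hkerP
  obtain ⟨B2, hB2, hB2det⟩ := exists_factor_of_psd_family R hRpsd hkerR
  have hB1Hdet : IsUnit (B1ᴴ).det := by
    rw [Matrix.det_conjTranspose]; exact hB1det.star
  have hB2Hdet : IsUnit (B2ᴴ).det := by
    rw [Matrix.det_conjTranspose]; exact hB2det.star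
  set W := B1⁻¹ with hWdef
  set V := B2⁻¹ with hVdef
  have hB1W : B1 * W = 1 := Matrix.mul_nonsing_inv _ hB1det
  have hWB1 : W * B1 = 1 := Matrix.nonsing_inv_mul _ hB1det
  have hB2V : B2 * V = 1 := Matrix.mul_nonsing_inv _ hB2det
  have hWH : Wᴴ = (B1ᴴ)⁻¹ := by rw [hWdef, Matrix.conjTranspose_nonsing_inv]
  have hVH : Vᴴ = (B2ᴴ)⁻¹ := by rw [hVdef, Matrix.conjTranspose_nonsing_inv]
  -- Kraus factorizations of the PSD matrices
  have hCex : ∀ i, ∃ C : Matrix (Fin dA) (Fin dA) ℂ, P i = Cᴴ * C :=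
    fun i => by open scoped MatrixOrder in exact CStarAlgebra.nonneg_iff_eq_star_mul_self.mp (hPpsd i).nonneg
  choose C hC using hCex
  have hDex : ∀ i, ∃ D : Matrix (Fin dA) (Fin dA) ℂ, R i = Dᴴ * D :=
    fun i => by open scoped MatrixOrder in exact CStarAlgebra.nonneg_iff_eq_star_mul_self.mp (hRpsd i).nonneg
  choose D hD using hDex
  -- the channels
  set A1 := blockOp (fun k => C k * W) with hA1def
  set A2 := blockOp (fun k => ((D k * V).map (star : ℂ → ℂ))) with hA2def
  have hA1graph : ∀ k l, (A1 k)ᴴ * A1 l =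
      if k = l then Wᴴ * P k * W else 0 := by
    intro k l
    rw [hA1def, blockOp_graph]
    by_cases hkl : k = l
    · subst hkl
      rw [if_pos rfl, if_pos rfl, hC k]
      simp only [conjTranspose_mul, Matrix.mul_assoc]
    · rw [if_neg hkl, if_neg hkl]
  have hA2graph : ∀ k l, (A2 k)ᴴ * A2 l =
      if k = l then (Vᴴ * R k * V).map (star : ℂ → ℂ) else 0 := by
    intro k l
    rw [hA2def, blockOp_graph]
    by_cases hkl : k = l
    · subst hkl
      rw [if_pos rfl, if_pos rfl, conj_mul_conj, hD k]
      simp only [conjTranspose_mul, Matrix.mul_assoc]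
    · rw [if_neg hkl, if_neg hkl]
  have hK1 : IsKraus A1 := by
    unfold IsKraus
    have h1 : ∀ k : Fin r, (A1 k)ᴴ * A1 k = Wᴴ * P k * W := by
      intro k; rw [hA1graph k k, if_pos rfl]
    rw [Finset.sum_congr rfl fun k _ => h1 k]
    have h2 : ∑ k, Wᴴ * P k * W = Wᴴ * (∑ k, P k) * W := by
      rw [← Finset.sum_mul, ← Finset.mul_sum]
    rw [h2, hB1, hWH]
    calc (B1ᴴ)⁻¹ * (B1ᴴ * B1) * B1⁻¹
        = ((B1ᴴ)⁻¹ * B1ᴴ) * (B1 * B1⁻¹) := by simp only [Matrix.mul_assoc]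
      _ = 1 := by
          rw [Matrix.nonsing_inv_mul _ hB1Hdet, Matrix.mul_nonsing_inv _ hB1det,
            Matrix.one_mul]
  have hK2 : IsKraus A2 := by
    unfold IsKraus
    have h1 : ∀ k : Fin s, (A2 k)ᴴ * A2 k = (Vᴴ * R k * V).map (star : ℂ → ℂ) := by
      intro k; rw [hA2graph k k, if_pos rfl]
    rw [Finset.sum_congr rfl fun k _ => h1 k]
    have h0 : ∑ k, Vᴴ * R k * V = Vᴴ * (∑ k, R k) * V := by
      rw [← Finset.sum_mul, ← Finset.mul_sum]
    have h2 : ∑ k, (Vᴴ * R k * V).map (star : ℂ → ℂ) =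
        (Vᴴ * (∑ k, R k) * V).map (star : ℂ → ℂ) := by
      rw [← h0]
      ext i j
      simp only [Matrix.map_apply, Matrix.sum_apply, star_sum]
    rw [h2]
    have h3 : Vᴴ * (∑ k, R k) * V = 1 := by
      rw [hB2, hVH]
      calc (B2ᴴ)⁻¹ * (B2ᴴ * B2) * B2⁻¹
          = ((B2ᴴ)⁻¹ * B2ᴴ) * (B2 * B2⁻¹) := by simp only [Matrix.mul_assoc]
        _ = 1 := by
            rw [Matrix.nonsing_inv_mul _ hB2Hdet, Matrix.mul_nonsing_inv _ hB2det,
              Matrix.one_mul]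
    rw [h3]
    exact Matrix.map_one _ (star_zero ℂ) (star_one ℂ)
  -- no zero error for the individual channels
  have hNZ1 : NoZeroError A1 := by
    apply noZeroError_of_graph (fun k => Wᴴ * P k * W) A1
      (fun k => by rw [hA1graph k k, if_pos rfl])
    intro N hN x y hx hy hq
    exact transfer1 (S : Set (Matrix (Fin dA) (Fin dA) ℂ)) P W B1 hB1W ha hPle
      N hN x y hx hy hq
  have hNZ2 : NoZeroError A2 := by
    apply noZeroError_of_graph (fun k => (Vᴴ * R k * V).map (star : ℂ → ℂ)) A2
      (fun k => by rw [hA2graph k k, if_pos rfl])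
    intro N hN x y hx hy hq
    apply transfer2 (frobOrthSet (S : Set (Matrix (Fin dA) (Fin dA) ℂ))) R V B2 hB2V
      hb hRle N hN (star x) (star y) (by simpa using hx) (by simpa using hy)
    intro F
    have h1 := hq F
    rw [show (kronPow N fun t => (Vᴴ * R (F t) * V).map (star : ℂ → ℂ)) =
        (kronPow N fun t => Vᴴ * R (F t) * V).map (star : ℂ → ℂ) from
      kronPow_map_star _, dot_map_star] at h1
    rwa [star_eq_zero] at h1
  -- the superactivating input pair
  refine ⟨r * dA, s * dA, r, s, A1, A2, hK1, hK2, hNZ1, hNZ2,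
    (fun p => (B1 * B2ᴴ) p.1 p.2), (fun p => (B1 * Xmat dA * B2ᴴ) p.1 p.2), ?_, ?_, ?_⟩
  · -- ψ ≠ 0
    intro h0
    have hM0 : B1 * B2ᴴ = 0 := by
      ext i j
      exact congrFun h0 (i, j)
    have hcalc : W * (B1 * B2ᴴ) * (B2ᴴ)⁻¹ = 1 := by
      calc W * (B1 * B2ᴴ) * (B2ᴴ)⁻¹
          = (W * B1) * (B2ᴴ * (B2ᴴ)⁻¹) := by simp only [Matrix.mul_assoc]
        _ = 1 := by rw [hWB1, Matrix.mul_nonsing_inv _ hB2Hdet, Matrix.one_mul]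
    rw [hM0, Matrix.mul_zero, Matrix.zero_mul] at hcalc
    have h1 := congrFun (congrFun hcalc ⟨0, hdA⟩) ⟨0, hdA⟩
    rw [Matrix.zero_apply, Matrix.one_apply_eq] at h1
    exact zero_ne_one h1
  · -- φ ≠ 0
    intro h0
    have hM0 : B1 * Xmat dA * B2ᴴ = 0 := by
      ext i j
      exact congrFun h0 (i, j)
    have hcalc : W * (B1 * Xmat dA * B2ᴴ) * (B2ᴴ)⁻¹ = Xmat dA := by
      calc W * (B1 * Xmat dA * B2ᴴ) * (B2ᴴ)⁻¹
          = (W * B1) * (Xmat dA * (B2ᴴ * (B2ᴴ)⁻¹)) := by simp only [Matrix.mul_assoc]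
        _ = Xmat dA := by
            rw [hWB1, Matrix.mul_nonsing_inv _ hB2Hdet, Matrix.mul_one, Matrix.one_mul]
    rw [hM0, Matrix.mul_zero, Matrix.zero_mul] at hcalc
    exact Xmat_ne_zero hdA hcalc.symm
  · -- orthogonal outputs of the joint channel
    rw [trace_applyKraus_outer]
    apply Finset.sum_eq_zero
    intro k _
    apply Finset.sum_eq_zero
    intro l _
    suffices hql : star ((jointKraus A1 A2 k).mulVec (fun p => (B1 * B2ᴴ) p.1 p.2)) ⬝ᵥ
        (jointKraus A1 A2 l).mulVec (fun p => (B1 * Xmat dA * B2ᴴ) p.1 p.2) = 0 by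
      rw [hql, zero_mul]
    rw [star_mulVec_dot]
    have hjk : (jointKraus A1 A2 k)ᴴ * jointKraus A1 A2 l =
        Matrix.kroneckerMap (· * ·) ((A1 k.1)ᴴ * A1 l.1) ((A2 k.2)ᴴ * A2 l.2) := by
      unfold jointKraus
      rw [kronecker_conjTranspose, Matrix.mul_kronecker_mul]
    rw [hjk, hA1graph, hA2graph]
    by_cases hk1 : k.1 = l.1
    · by_cases hk2 : k.2 = l.2
      · rw [if_pos hk1, if_pos hk2, hk1, hk2]
        rw [dot_kron]
        rw [map_star_transpose]
        have hherm : (Vᴴ * R l.2 * V)ᴴ = Vᴴ * R l.2 * V := by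
          simp only [conjTranspose_mul, conjTranspose_conjTranspose, (hRpsd l.2).1.eq,
            Matrix.mul_assoc]
        rw [hherm]
        -- reduce the trace
        have hPH : (B1 * B2ᴴ)ᴴ = B2 * B1ᴴ := by
          rw [conjTranspose_mul, conjTranspose_conjTranspose]
        have hred : (B1 * B2ᴴ)ᴴ * (Wᴴ * P l.1 * W) * (B1 * Xmat dA * B2ᴴ) *
            (Vᴴ * R l.2 * V) =
            B2 * (P l.1 * (Xmat dA * (R l.2 * V))) := by
          rw [hPH, hWH, hVH]
          calc B2 * B1ᴴ * ((B1ᴴ)⁻¹ * P l.1 * B1⁻¹) * (B1 * Xmat dA * B2ᴴ) *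
              ((B2ᴴ)⁻¹ * R l.2 * B2⁻¹)
              = B2 * (B1ᴴ * ((B1ᴴ)⁻¹ * (P l.1 * (B1⁻¹ * (B1 * (Xmat dA *
                (B2ᴴ * ((B2ᴴ)⁻¹ * (R l.2 * B2⁻¹))))))))) := by
                simp only [Matrix.mul_assoc]
            _ = B2 * (P l.1 * (Xmat dA * (R l.2 * B2⁻¹))) := by
                rw [Matrix.mul_nonsing_inv_cancel_left _ _ hB1Hdet,
                  Matrix.nonsing_inv_mul_cancel_left _ _ hB1det,
                  Matrix.mul_nonsing_inv_cancel_left _ _ hB2Hdet]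
            _ = B2 * (P l.1 * (Xmat dA * (R l.2 * V))) := by rw [hVdef]
        rw [hred]
        have htr : Matrix.trace (B2 * (P l.1 * (Xmat dA * (R l.2 * V)))) =
            Matrix.trace (P l.1 * Xmat dA * R l.2) := by
          rw [Matrix.trace_mul_comm]
          calc Matrix.trace (P l.1 * (Xmat dA * (R l.2 * V)) * B2)
              = Matrix.trace (P l.1 * Xmat dA * R l.2 * (V * B2)) := by
                simp only [Matrix.mul_assoc]
            _ = Matrix.trace (P l.1 * Xmat dA * R l.2) := by
                rw [hVdef, Matrix.nonsing_inv_mul _ hB2det, Matrix.mul_one]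
        rw [htr]
        obtain ⟨K, hKmem, hKX0⟩ := hRX l.2
        have hKX' : K * Xmat dA = R l.2 := hKX0
        have h0 := hKmem _ (hc _ (hXSX (P l.1) (hPS l.1)))
        unfold frobInner at h0
        rw [conjTranspose_conjTranspose] at h0
        calc Matrix.trace (P l.1 * Xmat dA * R l.2)
            = Matrix.trace (P l.1 * Xmat dA * K * Xmat dA) := by
              rw [← hKX']
              simp only [Matrix.mul_assoc]
          _ = Matrix.trace (Xmat dA * (P l.1 * Xmat dA) * K) := by
              rw [Matrix.trace_mul_cycle]
          _ = 0 := by rw [← Matrix.mul_assoc]; exact h0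
      · rw [if_neg hk2, Matrix.kronecker_zero, Matrix.zero_mulVec, dotProduct_zero]
    · rw [if_neg hk1, Matrix.zero_kronecker, Matrix.zero_mulVec, dotProduct_zero]
end
end

section
/- Let M be a quantum channel from ℂ² to ℂ² (i.e. M(ρ) = Σ_k B_k ρ B_kᴴ with 2×2 matrices B_k satisfying Σ_k B_kᴴ B_k = I₂). Let e₀, e₁ be the standard basis of ℂ² and e_± = (e₀ ± e₁)/√2. If M fixes the four projectors e₀e₀ᴴ, e₁e₁ᴴ, e₊e₊ᴴ, e₋e₋ᴴ, then M is the identity map: M(ρ) = ρ for every 2×2 complex matrix ρ. -/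
open Matrix

noncomputable section

/-- The standard basis vector `e₀` of `ℂ²`. -/
def e0 : Fin 2 → ℂ := fun i => if i = 0 then 1 else 0

/-- The standard basis vector `e₁` of `ℂ²`. -/
def e1 : Fin 2 → ℂ := fun i => if i = 1 then 1 else 0

/-- `e₊ = (e₀ + e₁)/√2`. -/
def ePlus : Fin 2 → ℂ := ((Real.sqrt 2 : ℝ) : ℂ)⁻¹ • (e0 + e1)

/-- `e₋ = (e₀ − e₁)/√2`. -/
def eMinus : Fin 2 → ℂ := ((Real.sqrt 2 : ℝ) : ℂ)⁻¹ • (e0 - e1)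

/-- Entrywise description of `applyKraus` for qubit matrices. -/
lemma applyKraus_apply {κ : ℕ} (B : Fin κ → Matrix (Fin 2) (Fin 2) ℂ)
    (ρ : Matrix (Fin 2) (Fin 2) ℂ) (i j : Fin 2) :
    (applyKraus B ρ) i j = ∑ k, ∑ p, ∑ q, B k i p * ρ p q * (starRingEnd ℂ) (B k j q) := by
  simp [applyKraus, Matrix.sum_apply, Matrix.mul_apply, conjTranspose_apply, Finset.sum_mul,
    mul_assoc, mul_add]

lemma outer_apply (ψ : Fin 2 → ℂ) (p q : Fin 2) :
    outer ψ p q = ψ p * (starRingEnd ℂ) (ψ q) := by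
  simp [outer, vecMulVec_apply, Pi.star_apply, RCLike.star_def]

lemma sum_mul_conj_eq_zero {κ : ℕ} (f : Fin κ → ℂ)
    (h : ∑ k, f k * (starRingEnd ℂ) (f k) = 0) : ∀ k, f k = 0 := by
  have h2 : ∑ k, (Complex.normSq (f k) : ℂ) = 0 := by
    simpa [Complex.mul_conj] using h
  have h3 : ∑ k, Complex.normSq (f k) = 0 := by exact_mod_cast h2
  intro k
  exact Complex.normSq_eq_zero.mp
    ((Finset.sum_eq_zero_iff_of_nonneg (fun i _ => Complex.normSq_nonneg (f i))).mp h3 k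
      (Finset.mem_univ k))

lemma sum_scalar_helper {κ : ℕ} (a : Fin κ → ℂ)
    (ha : ∑ k, a k * (starRingEnd ℂ) (a k) = 1) (c : ℂ) :
    ∑ k, a k * c * (starRingEnd ℂ) (a k) = c := by
  calc ∑ k, a k * c * (starRingEnd ℂ) (a k)
      = (∑ k, a k * (starRingEnd ℂ) (a k)) * c := by
        rw [Finset.sum_mul]; exact Finset.sum_congr rfl fun k _ => by ring
    _ = c := by rw [ha, one_mul]

/-- A qubit channel fixing the four projectors `e₀e₀ᴴ`, `e₁e₁ᴴ`, `e₊e₊ᴴ`, `e₋e₋ᴴ`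
is the identity map. -/
theorem qubit_channel_fixing_four_projectors_is_id
    {κ : ℕ} (B : Fin κ → Matrix (Fin 2) (Fin 2) ℂ) (hB : IsKraus B)
    (h0 : applyKraus B (outer e0) = outer e0)
    (h1 : applyKraus B (outer e1) = outer e1)
    (hp : applyKraus B (outer ePlus) = outer ePlus)
    (hm : applyKraus B (outer eMinus) = outer eMinus) :
    ∀ ρ : Matrix (Fin 2) (Fin 2) ℂ, applyKraus B ρ = ρ := by
  -- the Kraus operators are diagonal
  have hB10 : ∀ k, B k 1 0 = 0 := by
    apply sum_mul_conj_eq_zero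
    have h := congrFun (congrFun h0 1) 1
    rw [applyKraus_apply] at h
    simpa [Fin.sum_univ_two, outer_apply, e0] using h
  have hB01 : ∀ k, B k 0 1 = 0 := by
    apply sum_mul_conj_eq_zero
    have h := congrFun (congrFun h1 0) 0
    rw [applyKraus_apply] at h
    simpa [Fin.sum_univ_two, outer_apply, e1] using h
  -- normalisation of the diagonal entries
  have hK00 : ∑ k, B k 0 0 * (starRingEnd ℂ) (B k 0 0) = 1 := by
    have h := congrFun (congrFun hB 0) 0
    simp only [Matrix.sum_apply, Matrix.mul_apply, conjTranspose_apply, Fin.sum_univ_two,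
      Matrix.one_apply, if_true] at h
    simp only [hB10, hB01, map_zero, zero_mul, mul_zero, add_zero, zero_add] at h
    rw [show (1 : ℂ) = if ((0 : Fin 2) = 0) then 1 else 0 by norm_num, ← h]
    exact Finset.sum_congr rfl fun k _ => by rw [Complex.star_def, mul_comm]
  have hK11 : ∑ k, B k 1 1 * (starRingEnd ℂ) (B k 1 1) = 1 := by
    have h := congrFun (congrFun hB 1) 1
    simp only [Matrix.sum_apply, Matrix.mul_apply, conjTranspose_apply, Fin.sum_univ_two,
      Matrix.one_apply, if_true] at h
    simp only [hB10, hB01, map_zero, zero_mul, mul_zero, add_zero, zero_add] at h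
    rw [show (1 : ℂ) = if ((1 : Fin 2) = 1) then 1 else 0 by norm_num, ← h]
    exact Finset.sum_congr rfl fun k _ => by rw [Complex.star_def, mul_comm]
  -- the cross term from the `e₊` projector
  have hsq : ((Real.sqrt 2 : ℝ) : ℂ)⁻¹ * (starRingEnd ℂ) (((Real.sqrt 2 : ℝ) : ℂ)⁻¹) = 1/2 := by
    have hr : (Real.sqrt 2) * (Real.sqrt 2) = 2 := Real.mul_self_sqrt (by norm_num)
    have h2 : ((Real.sqrt 2 : ℝ) : ℂ) * ((Real.sqrt 2 : ℝ) : ℂ) = 2 := by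
      rw [← Complex.ofReal_mul, hr]; norm_num
    rw [Complex.conj_inv, Complex.conj_ofReal, ← mul_inv, h2]
    norm_num
  have hsq' : ((Real.sqrt 2 : ℝ) : ℂ)⁻¹ * ((Real.sqrt 2 : ℝ) : ℂ)⁻¹ = 1/2 := by
    rw [← hsq, Complex.conj_inv, Complex.conj_ofReal]
  have hcross : ∑ k, B k 0 0 * (starRingEnd ℂ) (B k 1 1) = 1 := by
    have h := congrFun (congrFun hp 0) 1
    rw [applyKraus_apply] at h
    simp only [Fin.sum_univ_two, outer_apply, ePlus, Pi.smul_apply, Pi.add_apply, e0, e1,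
      smul_eq_mul, hB01, hB10, map_zero, zero_mul, mul_zero, add_zero, zero_add, if_true,
      if_false, _root_.map_mul, _root_.map_one, mul_one, one_mul] at h
    norm_num at h
    calc ∑ k, B k 0 0 * (starRingEnd ℂ) (B k 1 1)
        = 2 * ∑ k, B k 0 0 * ((((Real.sqrt 2 : ℝ) : ℂ))⁻¹ * (((Real.sqrt 2 : ℝ) : ℂ))⁻¹) *
            (starRingEnd ℂ) (B k 1 1) := by
          rw [Finset.mul_sum]
          refine Finset.sum_congr rfl fun k _ => ?_
          rw [hsq']; ring
      _ = 2 * ((((Real.sqrt 2 : ℝ) : ℂ))⁻¹ * (((Real.sqrt 2 : ℝ) : ℂ))⁻¹) := by rw [h]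
      _ = 1 := by rw [hsq']; norm_num
  -- Cauchy–Schwarz equality: the two diagonal entries agree
  have heq : ∀ k, B k 1 1 = B k 0 0 := by
    have hz : ∑ k, (B k 0 0 - B k 1 1) * (starRingEnd ℂ) (B k 0 0 - B k 1 1) = 0 := by
      have hcross' : ∑ k, B k 1 1 * (starRingEnd ℂ) (B k 0 0) = 1 := by
        have := congrArg (starRingEnd ℂ) hcross
        simpa [map_sum, mul_comm] using this
      have expand : ∀ k, (B k 0 0 - B k 1 1) * (starRingEnd ℂ) (B k 0 0 - B k 1 1)
          = B k 0 0 * (starRingEnd ℂ) (B k 0 0) + B k 1 1 * (starRingEnd ℂ) (B k 1 1)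
            - B k 0 0 * (starRingEnd ℂ) (B k 1 1) - B k 1 1 * (starRingEnd ℂ) (B k 0 0) := by
        intro k; rw [map_sub]; ring
      rw [Finset.sum_congr rfl fun k _ => expand k]
      rw [Finset.sum_sub_distrib, Finset.sum_sub_distrib, Finset.sum_add_distrib,
        hK00, hK11, hcross, hcross']
      ring
    intro k
    have := sum_mul_conj_eq_zero _ hz k
    linear_combination -this
  -- conclude
  intro ρ
  ext i j
  rw [applyKraus_apply]
  fin_cases i <;> fin_cases j <;>
    simp only [Fin.mk_zero, Fin.mk_one, Fin.isValue, Fin.sum_univ_two, hB01, hB10, heq,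
      map_zero, zero_mul, mul_zero, add_zero, zero_add] <;>
    exact sum_scalar_helper _ hK00 _
end
end

section
/- For all positive integers dA, dB, d, k with d ≤ dA·dB, there exists a family 𝒫 of real polynomials in the 2·d·dA·dB real coordinates (real and imaginary parts) of a d-tuple (v_1, …, v_d) of vectors in ℂ^{dA} ⊗ ℂ^{dB} such that: a tuple (v_1, …, v_d) of linearly independent vectors is a common zero of all polynomials in 𝒫 if and only if the subspace S = span{v_1, …, v_d} is k-extendible (i.e. some nonzero product vector across the k-copy bipartition is orthogonal to S^{⊗k}). In other words, the set of linearly independent d-tuples spanning a k-extendible subspace is the intersection of a real Zariski-closed (algebraic) set with the set of linearly independent tuples. -/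
open Matrix

noncomputable section

/-- The real coordinates of a `d`-tuple of vectors in `ℂ^{dA} ⊗ ℂ^{dB}`: the real
part (`true`) and imaginary part (`false`) of each complex entry. -/
def realCoords {d dA dB : ℕ} (v : Fin d → (Fin dA × Fin dB) → ℂ) :
    Fin d × (Fin dA × Fin dB) × Bool → ℝ :=
  fun x => if x.2.2 then (v x.1 x.2.1).re else (v x.1 x.2.1).im

/-- The subspace of `dA×dB` matrices spanned by a tuple of vectors in
`ℂ^{dA} ⊗ ℂ^{dB}`, under the identification of bipartite vectors with matrices. -/
def spanOfTuple {d dA dB : ℕ} (v : Fin d → (Fin dA × Fin dB) → ℂ) :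
    Submodule ℂ (Matrix (Fin dA) (Fin dB) ℂ) :=
  Submodule.span ℂ (Set.range fun t => Matrix.of fun i j => v t (i, j))


namespace KExtAux

variable (dA dB d k : ℕ)

/-- Index type for the variables `X_{i,j}` (entries of a matrix in the k-fold space). -/
abbrev Idx := (Fin k → Fin dA) × (Fin k → Fin dB)

/-- Index for generators: 2x2 minors, or linear forms indexed by `T : Fin k → Fin d`. -/
abbrev GI := (Idx dA dB k × Idx dA dB k) ⊕ (Fin k → Fin d)

/-- Degree of each generator. -/
def gdeg : GI dA dB d k → ℕ
  | .inl _ => 2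
  | .inr _ => 1

variable {A : Type*} [CommRing A]

variable {dA dB d k}

/-- The generators: 2x2 minors and the linear forms with coefficients `κ`. -/
def gen (κ : (Fin k → Fin d) → Idx dA dB k → A) : GI dA dB d k → MvPolynomial (Idx dA dB k) A
  | .inl (p, q) => MvPolynomial.X p * MvPolynomial.X q
      - MvPolynomial.X (p.1, q.2) * MvPolynomial.X (q.1, p.2)
  | .inr T => ∑ p : Idx dA dB k, MvPolynomial.C (κ T p) * MvPolynomial.X p

lemma gen_isHomogeneous (κ : (Fin k → Fin d) → Idx dA dB k → A) (γ : GI dA dB d k) :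
    (gen κ γ).IsHomogeneous (gdeg dA dB d k γ) := by
  cases γ with
  | inl pq =>
      obtain ⟨p, q⟩ := pq
      exact ((MvPolynomial.isHomogeneous_X _ _).mul (MvPolynomial.isHomogeneous_X _ _)).sub
        ((MvPolynomial.isHomogeneous_X _ _).mul (MvPolynomial.isHomogeneous_X _ _))
  | inr T =>
      exact MvPolynomial.IsHomogeneous.sum _ _ _ fun p _ =>
        MvPolynomial.isHomogeneous_C_mul_X _ _

lemma map_gen {B : Type*} [CommRing B] (f : A →+* B)
    (κ : (Fin k → Fin d) → Idx dA dB k → A) (γ : GI dA dB d k) :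
    MvPolynomial.map f (gen κ γ) = gen (fun T p => f (κ T p)) γ := by
  cases γ with
  | inl pq => obtain ⟨p, q⟩ := pq; simp [gen]
  | inr T => simp [gen]

lemma eval_gen_inr (κ : (Fin k → Fin d) → Idx dA dB k → A) (x : Idx dA dB k → A)
    (T : Fin k → Fin d) :
    MvPolynomial.eval x (gen κ (.inr T)) = ∑ p : Idx dA dB k, κ T p * x p := by
  simp [gen]

lemma eval_gen_inl (κ : (Fin k → Fin d) → Idx dA dB k → A) (x : Idx dA dB k → A)
    (p q : Idx dA dB k) :
    MvPolynomial.eval x (gen κ (.inl (p, q))) = x p * x q - x (p.1, q.2) * x (q.1, p.2) := by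
  simp [gen]

/-- exponent finsupp from a bounded exponent function -/
def expOf {σ : Type*} [Fintype σ] {M : ℕ} (f : σ → Fin (M + 1)) : σ →₀ ℕ :=
  Finsupp.equivFunOnFinite.symm (fun p => (f p : ℕ))

@[simp] lemma expOf_apply {σ : Type*} [Fintype σ] {M : ℕ} (f : σ → Fin (M + 1)) (p : σ) :
    expOf f p = (f p : ℕ) := rfl

lemma expOf_injective {σ : Type*} [Fintype σ] {M : ℕ} :
    Function.Injective (expOf (σ := σ) (M := M)) := by
  intro f g h
  funext p
  have := DFunLike.congr_fun h p
  simpa [expOf, Fin.val_injective.eq_iff] using this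

lemma degree_expOf {σ : Type*} [Fintype σ] {M : ℕ} (f : σ → Fin (M + 1)) :
    (expOf f).degree = ∑ p, (f p : ℕ) := by
  rw [Finsupp.degree]
  refine Finset.sum_subset (Finset.subset_univ _) ?_
  intro p _ hp
  simpa using Finsupp.notMem_support_iff.mp hp

variable (dA dB d k)

/-- Row indices: exponent functions of total degree `M`. -/
def RIdx (M : ℕ) : Type _ := {α : Idx dA dB k → Fin (M + 1) // ∑ p, ((α p : ℕ)) = M}

/-- Column indices: a generator together with a cofactor monomial of complementary degree. -/
def CIdx (M : ℕ) : Type _ :=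
  {c : GI dA dB d k × (Idx dA dB k → Fin (M + 1)) //
    (∑ p, ((c.2 p : ℕ))) + gdeg dA dB d k c.1 = M}

instance (M : ℕ) : Fintype (RIdx dA dB k M) := by unfold RIdx; infer_instance
instance (M : ℕ) : Fintype (CIdx dA dB d k M) := by unfold CIdx; infer_instance
instance (M : ℕ) : DecidableEq (RIdx dA dB k M) := by unfold RIdx; infer_instance

variable {dA dB d k}

/-- The polynomial attached to a column. -/
def colPoly (κ : (Fin k → Fin d) → Idx dA dB k → A) (M : ℕ) (c : CIdx dA dB d k M) :
    MvPolynomial (Idx dA dB k) A :=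
  MvPolynomial.monomial (expOf c.1.2) 1 * gen κ c.1.1

lemma colPoly_isHomogeneous (κ : (Fin k → Fin d) → Idx dA dB k → A) (M : ℕ)
    (c : CIdx dA dB d k M) : (colPoly κ M c).IsHomogeneous M := by
  have h1 : (MvPolynomial.monomial (expOf c.1.2) (1 : A)).IsHomogeneous (∑ p, ((c.1.2 p : ℕ))) :=
    MvPolynomial.isHomogeneous_monomial _ (degree_expOf _)
  have := h1.mul (gen_isHomogeneous κ c.1.1)
  rwa [c.2] at this

/-- The coefficient matrix whose columns are the `colPoly`s expressed in the
monomial basis of degree `M`. -/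
def Umat (κ : (Fin k → Fin d) → Idx dA dB k → A) (M : ℕ) :
    Matrix (RIdx dA dB k M) (CIdx dA dB d k M) A :=
  Matrix.of fun ρ c => MvPolynomial.coeff (expOf ρ.1) (colPoly κ M c)

/-- Evaluating a homogeneous polynomial of degree `M` as a sum over row indices. -/
lemma eval_eq_sum_rows {M : ℕ} (q : MvPolynomial (Idx dA dB k) A) (hq : q.IsHomogeneous M)
    (x : Idx dA dB k → A) :
    MvPolynomial.eval x q
      = ∑ ρ : RIdx dA dB k M, MvPolynomial.coeff (expOf ρ.1) q * ∏ p, x p ^ ((ρ.1 p : ℕ)) := by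
  rw [MvPolynomial.eval_eq']
  have hsub : q.support ⊆ Finset.univ.image (fun ρ : RIdx dA dB k M => expOf ρ.1) := by
    intro e he
    have hco : MvPolynomial.coeff e q ≠ 0 := MvPolynomial.mem_support_iff.mp he
    have hdeg : e.degree = M := by
      by_contra h
      exact hco (hq.coeff_eq_zero h)
    have hdeg' : ∑ p, e p = M := by
      rw [← hdeg, Finsupp.degree]
      refine (Finset.sum_subset (Finset.subset_univ _) ?_).symm
      intro p _ hp
      simpa using Finsupp.notMem_support_iff.mp hp
    have hle : ∀ p, e p ≤ M := by
      intro p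
      rw [← hdeg']
      exact Finset.single_le_sum (fun _ _ => Nat.zero_le _) (Finset.mem_univ p)
    refine Finset.mem_image.mpr ⟨⟨fun p => ⟨e p, Nat.lt_succ_of_le (hle p)⟩, ?_⟩,
      Finset.mem_univ _, ?_⟩
    · simpa using hdeg'
    · ext p
      simp [expOf]
  rw [Finset.sum_subset hsub (by
    intro e _ he
    simp [MvPolynomial.notMem_support_iff.mp he]),
    Finset.sum_image (by
    intro ρ _ ρ' _ h
    exact Subtype.ext (expOf_injective h))]
  exact Finset.sum_congr rfl fun ρ _ => by simp [expOf_apply]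

/-- The vector of monomial values at a point. -/
def Xpow (M : ℕ) (x : Idx dA dB k → A) : RIdx dA dB k M → A :=
  fun ρ => ∏ p, x p ^ ((ρ.1 p : ℕ))

lemma vecMul_Xpow (κ : (Fin k → Fin d) → Idx dA dB k → A) (M : ℕ) (x : Idx dA dB k → A)
    (hx : ∀ γ, MvPolynomial.eval x (gen κ γ) = 0) :
    Xpow M x ᵥ* Umat κ M = 0 := by
  funext c
  have h1 : MvPolynomial.eval x (colPoly κ M c) = 0 := by
    rw [colPoly, _root_.map_mul, hx, mul_zero]
  have h2 := eval_eq_sum_rows (colPoly κ M c) (colPoly_isHomogeneous κ M c) x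
  rw [h1] at h2
  simp only [Matrix.vecMul, dotProduct, Pi.zero_apply, Umat, Matrix.of_apply, Xpow]
  have h3 : (∑ ρ : RIdx dA dB k M, (∏ p, x p ^ ((ρ.1 p : ℕ))) * MvPolynomial.coeff (expOf ρ.1) (colPoly κ M c))
      = ∑ ρ : RIdx dA dB k M, MvPolynomial.coeff (expOf ρ.1) (colPoly κ M c) * ∏ p, x p ^ ((ρ.1 p : ℕ)) :=
    Finset.sum_congr rfl fun ρ _ => mul_comm _ _
  rw [h3, ← h2]

/-- A row concentrated at one variable. -/
def rowAt (M : ℕ) (p : Idx dA dB k) : RIdx dA dB k M :=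
  ⟨fun p' => if p' = p then Fin.last M else 0, by
    simp [apply_ite (Fin.val), Finset.sum_ite_eq']⟩

lemma Xpow_rowAt (M : ℕ) (x : Idx dA dB k → A) (p : Idx dA dB k) :
    Xpow M x (rowAt M p) = x p ^ M := by
  unfold Xpow rowAt
  rw [Finset.prod_eq_single p]
  · simp
  · intro b _ hb; simp [hb]
  · intro h; exact absurd (Finset.mem_univ p) h

/-- If the Gram determinant is nonzero then the only common zero of the generators is `0`. -/
lemma sol_eq_zero_of_det_ne_zero (κ : (Fin k → Fin d) → Idx dA dB k → ℂ) (M : ℕ)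
    (x : Idx dA dB k → ℂ) (hx : ∀ γ, MvPolynomial.eval x (gen κ γ) = 0)
    (hdet : (Umat κ M * (Umat κ M)ᴴ).det ≠ 0) : x = 0 := by
  set U := Umat κ M with hU
  have hw : Xpow M x ᵥ* (U * Uᴴ) = 0 := by
    rw [← Matrix.vecMul_vecMul, vecMul_Xpow κ M x hx, Matrix.zero_vecMul]
  have hunit : IsUnit (U * Uᴴ).det := isUnit_iff_ne_zero.mpr hdet
  have hw0 : Xpow M x = 0 := by
    calc Xpow M x = Xpow M x ᵥ* 1 := (Matrix.vecMul_one _).symm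
    _ = Xpow M x ᵥ* ((U * Uᴴ) * (U * Uᴴ)⁻¹) := by rw [Matrix.mul_nonsing_inv _ hunit]
    _ = (Xpow M x ᵥ* (U * Uᴴ)) ᵥ* (U * Uᴴ)⁻¹ := (Matrix.vecMul_vecMul _ _ _).symm
    _ = 0 := by rw [hw, Matrix.zero_vecMul]
  funext p
  have hp : x p ^ M = 0 := by
    rw [← Xpow_rowAt M x p, hw0]; rfl
  rcases M with _ | M
  · exact absurd hp (by simp)
  · exact pow_eq_zero_iff (Nat.succ_ne_zero M) |>.mp hp

/-- If the only common zero of the generators is `0`, then some Gram determinant is nonzero. -/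
lemma exists_det_ne_zero [Nonempty (Idx dA dB k)] (κ : (Fin k → Fin d) → Idx dA dB k → ℂ)
    (htriv : ∀ x : Idx dA dB k → ℂ, (∀ γ, MvPolynomial.eval x (gen κ γ) = 0) → x = 0) :
    ∃ M, (Umat κ M * (Umat κ M)ᴴ).det ≠ 0 := by
  classical
  set I : Ideal (MvPolynomial (Idx dA dB k) ℂ) := Ideal.span (Set.range (gen κ)) with hI
  -- every variable is in the radical of I
  have hrad : ∀ p : Idx dA dB k, MvPolynomial.X p ∈ I.radical := by
    intro p
    rw [← MvPolynomial.vanishingIdeal_zeroLocus_eq_radical (K := ℂ)]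
    intro x hx
    have hx' : ∀ γ, MvPolynomial.eval x (gen κ γ) = 0 := fun γ => by
      simpa using hx _ (Ideal.subset_span (Set.mem_range_self γ))
    have := htriv x hx'
    simp [this]
  choose n hn using fun p => (Ideal.mem_radical_iff.mp (hrad p))
  set N : ℕ := (∑ p, n p) + 1 with hN
  have hXN : ∀ p : Idx dA dB k, MvPolynomial.X p ^ N ∈ I := by
    intro p
    have hle : n p ≤ N := le_trans (Finset.single_le_sum
      (fun _ _ => Nat.zero_le _) (Finset.mem_univ p)) (Nat.le_succ _)
    rw [← pow_sub_mul_pow (MvPolynomial.X p : MvPolynomial (Idx dA dB k) ℂ) hle]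
    exact Ideal.mul_mem_left _ _ (hn p)
  set M : ℕ := N * Fintype.card (Idx dA dB k) with hM
  -- every degree-M monomial is in the span of the columns
  have hmono : ∀ ρ : RIdx dA dB k M,
      (MvPolynomial.monomial (expOf ρ.1) (1 : ℂ))
        ∈ Submodule.span ℂ (Set.range (colPoly κ M)) := by
    intro ρ
    -- pigeonhole: some exponent is at least N
    obtain ⟨p0, hp0⟩ : ∃ p0, N ≤ (ρ.1 p0 : ℕ) := by
      by_contra h
      push_neg at h
      have hb : ∀ p ∈ Finset.univ, ((ρ.1 p : ℕ)) ≤ N - 1 := fun p _ =>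
        Nat.le_pred_of_lt (h p)
      have h2 := Finset.sum_le_sum hb
      rw [ρ.2, Finset.sum_const, smul_eq_mul] at h2
      have hcard : 0 < Fintype.card (Idx dA dB k) := Fintype.card_pos
      have hlt : (Finset.univ : Finset (Idx dA dB k)).card * (N - 1) < N * Fintype.card (Idx dA dB k) := by
        rw [Finset.card_univ, mul_comm]
        exact (Nat.mul_lt_mul_right hcard).mpr (by omega)
      exact lt_irrefl M (lt_of_le_of_lt h2 (hM ▸ hlt))
    -- hence the monomial is in I
    have hmem : (MvPolynomial.monomial (expOf ρ.1) (1 : ℂ)) ∈ I := by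
      have hle : Finsupp.single p0 N ≤ expOf ρ.1 := Finsupp.single_le_iff.mpr hp0
      have key : (MvPolynomial.X p0 : MvPolynomial (Idx dA dB k) ℂ) ^ N *
          MvPolynomial.monomial (expOf ρ.1 - Finsupp.single p0 N) 1
          = MvPolynomial.monomial (expOf ρ.1) 1 := by
        rw [MvPolynomial.X_pow_eq_monomial, MvPolynomial.monomial_mul, one_mul,
          add_tsub_cancel_of_le hle]
      rw [← key]
      exact Ideal.mul_mem_right _ _ (hXN p0)
    -- ideal membership gives a representation with polynomial coefficients
    obtain ⟨c, hc⟩ := Ideal.mem_span_range_iff_exists_fun.mp hmem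
    -- take degree-M homogeneous components
    have hhom : (MvPolynomial.monomial (expOf ρ.1) (1 : ℂ)).IsHomogeneous M := by
      refine MvPolynomial.isHomogeneous_monomial _ ?_
      rw [degree_expOf, ρ.2]
    have hcomp : MvPolynomial.homogeneousComponent M (MvPolynomial.monomial (expOf ρ.1) (1 : ℂ))
        = MvPolynomial.monomial (expOf ρ.1) (1 : ℂ) := by
      rw [MvPolynomial.homogeneousComponent_of_mem
        ((MvPolynomial.mem_homogeneousSubmodule _ _).mpr hhom), if_pos rfl]
    rw [← hcomp, ← hc, map_sum]
    refine Submodule.sum_mem _ fun γ _ => ?_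
    -- expand c γ into monomials
    have hexp : c γ * gen κ γ
        = ∑ β ∈ (c γ).support, MvPolynomial.monomial β (MvPolynomial.coeff β (c γ)) * gen κ γ := by
      rw [← Finset.sum_mul, MvPolynomial.support_sum_monomial_coeff]
    rw [hexp, map_sum]
    refine Submodule.sum_mem _ fun β _ => ?_
    have hterm : (MvPolynomial.monomial β (MvPolynomial.coeff β (c γ)) * gen κ γ).IsHomogeneous
        (β.degree + gdeg dA dB d k γ) :=
      (MvPolynomial.isHomogeneous_monomial _ rfl).mul (gen_isHomogeneous κ γ)
    rw [MvPolynomial.homogeneousComponent_of_mem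
      ((MvPolynomial.mem_homogeneousSubmodule _ _).mpr hterm)]
    split_ifs with hMd
    · -- the term is a column
      have hβdeg : ∑ p, β p = β.degree := by
        rw [Finsupp.degree]
        refine (Finset.sum_subset (Finset.subset_univ _) ?_).symm
        intro p _ hp
        simpa using Finsupp.notMem_support_iff.mp hp
      have hβle : ∀ p, β p ≤ M := by
        intro p
        have h1 : β p ≤ β.degree := by
          rw [← hβdeg]
          exact Finset.single_le_sum (fun _ _ => Nat.zero_le _) (Finset.mem_univ p)
        exact le_trans h1 (le_trans (Nat.le_add_right _ _) (le_of_eq hMd.symm))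
      set c' : CIdx dA dB d k M := ⟨(γ, fun p => ⟨β p, Nat.lt_succ_of_le (hβle p)⟩), by
        simpa [hβdeg] using hMd.symm⟩ with hc'
      have hβ : expOf c'.1.2 = β := by ext p; simp [hc', expOf]
      have : MvPolynomial.monomial β (MvPolynomial.coeff β (c γ)) * gen κ γ
          = (MvPolynomial.coeff β (c γ)) • colPoly κ M c' := by
        rw [colPoly, hβ, ← smul_mul_assoc, MvPolynomial.smul_monomial, smul_eq_mul, mul_one]
      rw [this]
      exact Submodule.smul_mem _ _ (Submodule.subset_span (Set.mem_range_self c'))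
    · exact Submodule.zero_mem _
  -- now show the Gram determinant at M is nonzero
  refine ⟨M, fun hdet => ?_⟩
  obtain ⟨y, hy0, hyV⟩ := Matrix.exists_vecMul_eq_zero_iff.mpr hdet
  -- y is in the left kernel of U itself
  have hyU : y ᵥ* Umat κ M = 0 := by
    set U := Umat κ M
    have h1 : (y ᵥ* (U * Uᴴ)) ⬝ᵥ star y = 0 := by rw [hyV, zero_dotProduct]
    have h2 : (y ᵥ* (U * Uᴴ)) ⬝ᵥ star y = (y ᵥ* U) ⬝ᵥ star (y ᵥ* U) := by
      rw [← Matrix.vecMul_vecMul, ← Matrix.dotProduct_mulVec, Matrix.star_vecMul]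
    have h3 : (y ᵥ* U) ⬝ᵥ star (y ᵥ* U) = 0 := by rw [← h2, h1]
    open ComplexOrder in
    have := dotProduct_star_self_eq_zero (v := star (y ᵥ* U)) |>.mp (by
      rwa [star_star])
    rw [← star_eq_zero]
    exact this
  -- the linear functional given by y kills all columns, hence all degree-M monomials
  have hker : ∀ ρ0 : RIdx dA dB k M, y ρ0 = 0 := by
    intro ρ0
    set Φ : MvPolynomial (Idx dA dB k) ℂ →ₗ[ℂ] ℂ :=
      ∑ ρ : RIdx dA dB k M, y ρ • MvPolynomial.lcoeff ℂ (expOf ρ.1) with hΦ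
    have hΦapply : ∀ q, Φ q = ∑ ρ : RIdx dA dB k M, y ρ * MvPolynomial.coeff (expOf ρ.1) q := by
      intro q
      rw [hΦ]
      simp [MvPolynomial.lcoeff]
    have hcol : ∀ c, Φ (colPoly κ M c) = 0 := by
      intro c
      rw [hΦapply]
      have := congrFun hyU c
      simpa [Matrix.vecMul, dotProduct, Umat] using this
    have hspan : Submodule.span ℂ (Set.range (colPoly κ M)) ≤ LinearMap.ker Φ := by
      rw [Submodule.span_le]
      rintro _ ⟨c, rfl⟩
      exact hcol c
    have hμ := hspan (hmono ρ0)
    rw [LinearMap.mem_ker, hΦapply] at hμ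
    rw [← hμ]
    rw [Finset.sum_eq_single ρ0]
    · simp [MvPolynomial.coeff_monomial]
    · intro ρ _ hρ
      rw [MvPolynomial.coeff_monomial, if_neg, mul_zero]
      exact fun h => hρ (Subtype.ext (expOf_injective h)).symm
    · intro h; exact absurd (Finset.mem_univ ρ0) h
  exact hy0 (funext hker)

/-- The combined equivalence: nontrivial common zero iff all Gram determinants vanish. -/
lemma exists_nonzero_sol_iff_forall_det [Nonempty (Idx dA dB k)]
    (κ : (Fin k → Fin d) → Idx dA dB k → ℂ) :
    (∃ x : Idx dA dB k → ℂ, x ≠ 0 ∧ ∀ γ, MvPolynomial.eval x (gen κ γ) = 0) ↔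
      ∀ M, (Umat κ M * (Umat κ M)ᴴ).det = 0 := by
  constructor
  · rintro ⟨x, hx0, hx⟩ M
    by_contra hdet
    exact hx0 (sol_eq_zero_of_det_ne_zero κ M x hx hdet)
  · intro hall
    by_contra hno
    push_neg at hno
    obtain ⟨M, hM⟩ := exists_det_ne_zero κ (fun x hx => by
      by_contra hx0
      obtain ⟨γ, hγ⟩ := hno x hx0
      exact hγ (hx γ))
    exact hM (hall M)

/-- Conjugated coefficients of the linear generators attached to a tuple `v`. -/
def κOf (v : Fin d → (Fin dA × Fin dB) → ℂ) (k : ℕ) :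
    (Fin k → Fin d) → Idx dA dB k → ℂ :=
  fun T p => starRingEnd ℂ (∏ t, v (T t) (p.1 t, p.2 t))

/-- The matrices attached to a tuple `v`. -/
def Wof (v : Fin d → (Fin dA × Fin dB) → ℂ) (s : Fin d) : Matrix (Fin dA) (Fin dB) ℂ :=
  Matrix.of fun i j => v s (i, j)

/-- Matrix entry as a linear map. -/
def entryLM (i : Fin dA) (j : Fin dB) : Matrix (Fin dA) (Fin dB) ℂ →ₗ[ℂ] ℂ where
  toFun A := A i j
  map_add' _ _ := rfl
  map_smul' _ _ := rfl

/-- The conjugate-orthogonality pairing, as a multilinear map in the `k` matrices. -/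
def Gmap (k : ℕ) (X : Idx dA dB k → ℂ) :
    MultilinearMap ℂ (fun _ : Fin k => Matrix (Fin dA) (Fin dB) ℂ) ℂ :=
  ∑ p : Idx dA dB k, (starRingEnd ℂ (X p)) •
    ((MultilinearMap.mkPiAlgebra ℂ (Fin k) ℂ).compLinearMap (fun t => entryLM (p.1 t) (p.2 t)))

lemma Gmap_apply (k : ℕ) (X : Idx dA dB k → ℂ) (Mt : Fin k → Matrix (Fin dA) (Fin dB) ℂ) :
    Gmap k X Mt = ∑ p : Idx dA dB k,
      (starRingEnd ℂ) (X p) * ∏ t, Mt t (p.1 t) (p.2 t) := by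
  simp [Gmap, entryLM, MultilinearMap.sum_apply, MultilinearMap.smul_apply,
    MultilinearMap.compLinearMap_apply, MultilinearMap.mkPiAlgebra_apply, smul_eq_mul]
  rfl

lemma frobInner_kronPow_vecMulVec (k : ℕ) (Mt : Fin k → Matrix (Fin dA) (Fin dB) ℂ)
    (u : (Fin k → Fin dA) → ℂ) (w : (Fin k → Fin dB) → ℂ) :
    frobInner (kronPow k Mt) (Matrix.vecMulVec u w)
      = ∑ p : Idx dA dB k,
          (starRingEnd ℂ) (∏ t, Mt t (p.1 t) (p.2 t)) * (u p.1 * w p.2) := by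
  rw [Fintype.sum_prod_type]
  simp only [frobInner, Matrix.trace, Matrix.diag, Matrix.mul_apply,
    Matrix.conjTranspose_apply, Matrix.vecMulVec_apply, kronPow, Matrix.of_apply]
  rw [Finset.sum_comm]
  refine Finset.sum_congr rfl fun i _ => Finset.sum_congr rfl fun j _ => ?_
  rw [starRingEnd_apply]

lemma frobInner_eq_conj_Gmap (k : ℕ) (X : Idx dA dB k → ℂ)
    (Mt : Fin k → Matrix (Fin dA) (Fin dB) ℂ)
    (u : (Fin k → Fin dA) → ℂ) (w : (Fin k → Fin dB) → ℂ)
    (h : ∀ p : Idx dA dB k, u p.1 * w p.2 = X p) :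
    frobInner (kronPow k Mt) (Matrix.vecMulVec u w) = (starRingEnd ℂ) (Gmap k X Mt) := by
  rw [frobInner_kronPow_vecMulVec, Gmap_apply, map_sum]
  refine Finset.sum_congr rfl fun p _ => ?_
  rw [h p, _root_.map_mul, Complex.conj_conj]
  ring

/-- `Gmap` vanishes on tuples from the span if it vanishes on the generators. -/
lemma Gmap_eq_zero_of_span (k : ℕ) (X : Idx dA dB k → ℂ)
    (v : Fin d → (Fin dA × Fin dB) → ℂ)
    (h0 : ∀ T : Fin k → Fin d, Gmap k X (fun t => Wof v (T t)) = 0)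
    (Mt : Fin k → Matrix (Fin dA) (Fin dB) ℂ)
    (hMt : ∀ t, Mt t ∈ Submodule.span ℂ (Set.range (Wof v))) :
    Gmap k X Mt = 0 := by
  have hc : ∀ t, ∃ c : Fin d → ℂ, ∑ s, c s • Wof v s = Mt t := fun t =>
    (Submodule.mem_span_range_iff_exists_fun (R := ℂ)).mp (hMt t)
  choose c hc using hc
  have : Mt = fun t => ∑ s, c t s • Wof v s := by
    funext t; exact (hc t).symm
  rw [this, MultilinearMap.map_sum]
  refine Finset.sum_eq_zero fun T _ => ?_
  rw [MultilinearMap.map_smul_univ, h0 T, smul_zero]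

lemma Gmap_gen_inr (k : ℕ) (X : Idx dA dB k → ℂ) (v : Fin d → (Fin dA × Fin dB) → ℂ)
    (T : Fin k → Fin d) :
    Gmap k X (fun t => Wof v (T t))
      = (starRingEnd ℂ) (MvPolynomial.eval X (gen (κOf v k) (.inr T))) := by
  rw [Gmap_apply, eval_gen_inr, map_sum]
  refine Finset.sum_congr rfl fun p _ => ?_
  simp only [κOf, Wof, Matrix.of_apply]
  rw [_root_.map_mul, Complex.conj_conj]
  ring

/-- **Claim A**: non-unextendibility is equivalent to a nontrivial common zero of
the generators. -/
lemma not_kunextendible_iff (k : ℕ) (v : Fin d → (Fin dA × Fin dB) → ℂ) :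
    ¬ KUnextendible (spanOfTuple v : Set (Matrix (Fin dA) (Fin dB) ℂ)) k ↔
      ∃ X : Idx dA dB k → ℂ, X ≠ 0 ∧ ∀ γ, MvPolynomial.eval X (gen (κOf v k) γ) = 0 := by
  unfold KUnextendible
  push_neg
  constructor
  · rintro ⟨u, w, hu, hw, hall⟩
    refine ⟨fun p => u p.1 * w p.2, ?_, ?_⟩
    · obtain ⟨i, hi⟩ := Function.ne_iff.mp hu
      obtain ⟨j, hj⟩ := Function.ne_iff.mp hw
      intro h
      have := congrFun h (i, j)
      simp only [Pi.zero_apply] at this hi hj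
      exact hj (by
        rcases mul_eq_zero.mp this with h' | h'
        · exact absurd h' hi
        · exact h')
    · intro γ
      cases γ with
      | inl pq =>
          obtain ⟨p, q⟩ := pq
          rw [eval_gen_inl]
          ring
      | inr T =>
          have hmem : ∀ t, Wof v (T t) ∈ (spanOfTuple v : Set (Matrix (Fin dA) (Fin dB) ℂ)) :=
            fun t => Submodule.subset_span ⟨T t, rfl⟩
          have h0 := hall (fun t => Wof v (T t)) hmem
          have := frobInner_eq_conj_Gmap k (fun p => u p.1 * w p.2)
            (fun t => Wof v (T t)) u w (fun p => rfl)
          rw [this, Gmap_gen_inr] at h0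
          simpa using h0
  · rintro ⟨X, hX0, hsol⟩
    obtain ⟨p0, hp0⟩ := Function.ne_iff.mp hX0
    simp only [Pi.zero_apply] at hp0
    set u : (Fin k → Fin dA) → ℂ := fun i => X (i, p0.2) with hu_def
    set w : (Fin k → Fin dB) → ℂ := fun j => X (p0.1, j) * (X p0)⁻¹ with hw_def
    have hprod : ∀ p : Idx dA dB k, u p.1 * w p.2 = X p := by
      intro p
      have hminor := hsol (.inl (p, p0))
      rw [eval_gen_inl] at hminor
      have heq : X (p.1, p0.2) * X (p0.1, p.2) = X p * X p0 := by
        have := sub_eq_zero.mp hminor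
        rw [this]
      calc u p.1 * w p.2 = (X (p.1, p0.2) * X (p0.1, p.2)) * (X p0)⁻¹ := by
            rw [hu_def, hw_def]; ring
        _ = (X p * X p0) * (X p0)⁻¹ := by rw [heq]
        _ = X p := by field_simp
    refine ⟨u, w, ?_, ?_, ?_⟩
    · intro h
      have := congrFun h p0.1
      simp only [Pi.zero_apply, hu_def] at this
      rw [Prod.mk.eta] at this
      exact hp0 this
    · intro h
      have := congrFun h p0.2
      simp only [Pi.zero_apply, hw_def] at this
      rw [Prod.mk.eta, mul_inv_cancel₀ hp0] at this
      exact (one_ne_zero : (1 : ℂ) ≠ 0) this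
    · intro Mt hMt
      rw [frobInner_eq_conj_Gmap k X Mt u w hprod]
      have : Gmap k X Mt = 0 := by
        refine Gmap_eq_zero_of_span k X v ?_ Mt hMt
        intro T
        rw [Gmap_gen_inr, hsol (.inr T), map_zero]
      rw [this, map_zero]

/-! ### The polynomial family in the real coordinates -/

/-- Variable index type for the real-coordinate polynomials. -/
abbrev Tau (dA dB d : ℕ) := Fin d × (Fin dA × Fin dB) × Bool

variable {dA dB d k : ℕ}

/-- Polynomial representing the complex conjugate of the entry `v s e`. -/
def vbar (s : Fin d) (e : Fin dA × Fin dB) : MvPolynomial (Tau dA dB d) ℂ :=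
  MvPolynomial.X (s, e, true) - MvPolynomial.C Complex.I * MvPolynomial.X (s, e, false)

/-- Polynomial coefficients of the linear generators. -/
def κPoly (k : ℕ) : (Fin k → Fin d) → Idx dA dB k → MvPolynomial (Tau dA dB d) ℂ :=
  fun T p => ∏ t, vbar (T t) (p.1 t, p.2 t)

/-- The complexified coordinates of a tuple. -/
def coordC (v : Fin d → (Fin dA × Fin dB) → ℂ) : Tau dA dB d → ℂ :=
  fun s => ((realCoords v s : ℝ) : ℂ)

lemma eval_vbar (v : Fin d → (Fin dA × Fin dB) → ℂ) (s : Fin d) (e : Fin dA × Fin dB) :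
    MvPolynomial.eval (coordC v) (vbar s e) = (starRingEnd ℂ) (v s e) := by
  simp only [vbar, map_sub, _root_.map_mul, MvPolynomial.eval_X, MvPolynomial.eval_C,
    coordC, realCoords]
  apply Complex.ext <;> simp

lemma eval_κPoly (v : Fin d → (Fin dA × Fin dB) → ℂ) (T : Fin k → Fin d) (p : Idx dA dB k) :
    MvPolynomial.eval (coordC v) (κPoly k T p) = κOf v k T p := by
  rw [κPoly, map_prod, κOf, map_prod]
  exact Finset.prod_congr rfl fun t _ => eval_vbar v (T t) (p.1 t, p.2 t)

/-- Ring homomorphisms act entrywise on `Umat`. -/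
lemma ringHom_Umat {A B : Type*} [CommRing A] [CommRing B] (f : A →+* B)
    (κ : (Fin k → Fin d) → Idx dA dB k → A) (M : ℕ) (ρ : RIdx dA dB k M)
    (c : CIdx dA dB d k M) :
    f (Umat κ M ρ c) = Umat (fun T p => f (κ T p)) M ρ c := by
  simp only [Umat, Matrix.of_apply, ← MvPolynomial.coeff_map]
  congr 1
  rw [colPoly, colPoly, _root_.map_mul, MvPolynomial.map_monomial, f.map_one, map_gen]

/-- Conjugating coefficients corresponds to conjugating values at real points. -/
lemma eval_conjmap (x : Tau dA dB d → ℂ) (hx : ∀ s, (starRingEnd ℂ) (x s) = x s)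
    (q : MvPolynomial (Tau dA dB d) ℂ) :
    MvPolynomial.eval x (MvPolynomial.map (starRingEnd ℂ) q)
      = (starRingEnd ℂ) (MvPolynomial.eval x q) := by
  rw [MvPolynomial.eval_map, ← MvPolynomial.eval₂_id q, MvPolynomial.eval₂_comp_left,
    RingHom.comp_id]
  congr 1
  funext s
  exact (hx s).symm

lemma conj_coordC (v : Fin d → (Fin dA × Fin dB) → ℂ) (s : Tau dA dB d) :
    (starRingEnd ℂ) (coordC v s) = coordC v s := by
  simp [coordC]

/-- Gram-determinant polynomials in the real coordinates. -/
def PolyDet (dA dB d k : ℕ) (M : ℕ) : MvPolynomial (Tau dA dB d) ℂ :=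
  Matrix.det (Umat (κPoly (dA := dA) (dB := dB) k) M *
    ((Umat (κPoly (dA := dA) (dB := dB) k) M).map (MvPolynomial.map (starRingEnd ℂ))).transpose)

lemma eval_PolyDet (v : Fin d → (Fin dA × Fin dB) → ℂ) (M : ℕ) :
    MvPolynomial.eval (coordC v) (PolyDet dA dB d k M)
      = ((Umat (κOf v k) M) * (Umat (κOf v k) M)ᴴ).det := by
  have hκ : (fun (T : Fin k → Fin d) (p : Idx dA dB k) =>
      MvPolynomial.eval (coordC v) (κPoly k T p)) = κOf v k :=
    funext fun T => funext fun p => eval_κPoly v T p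
  rw [PolyDet, RingHom.map_det (MvPolynomial.eval (coordC v))]
  rw [RingHom.mapMatrix_apply]; erw [Matrix.map_mul]
  have hU : (Umat (κPoly (dA := dA) (dB := dB) k) M).map ⇑(MvPolynomial.eval (coordC v))
      = Umat (κOf v k) M := by
    ext ρ c
    rw [Matrix.map_apply, ringHom_Umat, hκ]
  have hT : (((Umat (κPoly (dA := dA) (dB := dB) k) M).map
        ⇑(MvPolynomial.map (starRingEnd ℂ)))ᵀ).map ⇑(MvPolynomial.eval (coordC v))
      = (Umat (κOf v k) M)ᴴ := by
    ext c ρ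
    rw [Matrix.map_apply, Matrix.transpose_apply, Matrix.map_apply,
      Matrix.conjTranspose_apply, eval_conjmap (coordC v) (conj_coordC v), ringHom_Umat, hκ,
      starRingEnd_apply]
  rw [hU, hT]

/-- Real part of a complex polynomial (valid for evaluation at real points). -/
def rePoly (P : MvPolynomial (Tau dA dB d) ℂ) : MvPolynomial (Tau dA dB d) ℝ :=
  ∑ α ∈ P.support, MvPolynomial.monomial α (P.coeff α).re

/-- Imaginary part of a complex polynomial (valid for evaluation at real points). -/
def imPoly (P : MvPolynomial (Tau dA dB d) ℂ) : MvPolynomial (Tau dA dB d) ℝ :=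
  ∑ α ∈ P.support, MvPolynomial.monomial α (P.coeff α).im

lemma eval_split (P : MvPolynomial (Tau dA dB d) ℂ) (y : Tau dA dB d → ℝ) :
    MvPolynomial.eval (fun s => ((y s : ℝ) : ℂ)) P
      = (MvPolynomial.eval y (rePoly P) : ℂ) + (MvPolynomial.eval y (imPoly P) : ℂ) * Complex.I := by
  rw [MvPolynomial.eval_eq (fun s => ((y s : ℝ) : ℂ)) P]
  have hre : MvPolynomial.eval y (rePoly P)
      = ∑ α ∈ P.support, (P.coeff α).re * ∏ i ∈ α.support, y i ^ α i := by
    rw [rePoly, map_sum]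
    exact Finset.sum_congr rfl fun α _ => by rw [MvPolynomial.eval_monomial]; rfl
  have him : MvPolynomial.eval y (imPoly P)
      = ∑ α ∈ P.support, (P.coeff α).im * ∏ i ∈ α.support, y i ^ α i := by
    rw [imPoly, map_sum]
    exact Finset.sum_congr rfl fun α _ => by rw [MvPolynomial.eval_monomial]; rfl
  rw [hre, him]
  push_cast
  rw [Finset.sum_mul, ← Finset.sum_add_distrib]
  refine Finset.sum_congr rfl fun α _ => ?_
  conv_lhs => rw [← Complex.re_add_im (P.coeff α)]
  ring

lemma eval_zero_iff (P : MvPolynomial (Tau dA dB d) ℂ) (y : Tau dA dB d → ℝ) :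
    MvPolynomial.eval (fun s => ((y s : ℝ) : ℂ)) P = 0
      ↔ MvPolynomial.eval y (rePoly P) = 0 ∧ MvPolynomial.eval y (imPoly P) = 0 := by
  rw [eval_split P y]
  constructor
  · intro h
    have hre := congrArg Complex.re h
    have him := congrArg Complex.im h
    simp at hre him
    exact ⟨hre, him⟩
  · rintro ⟨h1, h2⟩
    rw [h1, h2]
    simp

end KExtAux

end

/-- **`k`-extendibility is a real algebraic condition (Lemma 3 of the paper).**
There is a family of real polynomials in the real coordinates of a `d`-tuple of
vectors in `ℂ^{dA} ⊗ ℂ^{dB}` whose common zeros, among linearly independent tuples,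
are exactly the tuples spanning a `k`-extendible subspace. -/
theorem kExtendible_is_algebraic
    (dA dB d k : ℕ) (hdA : 0 < dA) (hdB : 0 < dB) (hd : 0 < d) (hk : 0 < k)
    (hdim : d ≤ dA * dB) :
    ∃ Polys : Set (MvPolynomial (Fin d × (Fin dA × Fin dB) × Bool) ℝ),
      ∀ v : Fin d → (Fin dA × Fin dB) → ℂ, LinearIndependent ℂ v →
        ((∀ p ∈ Polys, MvPolynomial.eval (realCoords v) p = 0) ↔
          ¬ KUnextendible (spanOfTuple v : Set (Matrix (Fin dA) (Fin dB) ℂ)) k) := by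
  refine ⟨⋃ M : ℕ, {KExtAux.rePoly (KExtAux.PolyDet dA dB d k M),
    KExtAux.imPoly (KExtAux.PolyDet dA dB d k M)}, ?_⟩
  intro v _
  have hne : Nonempty (KExtAux.Idx dA dB k) :=
    ⟨(fun _ => ⟨0, hdA⟩, fun _ => ⟨0, hdB⟩)⟩
  rw [KExtAux.not_kunextendible_iff k v,
    KExtAux.exists_nonzero_sol_iff_forall_det (KExtAux.κOf v k)]
  have hcoord : (fun s => ((realCoords v s : ℝ) : ℂ)) = KExtAux.coordC v := rfl
  constructor
  · intro h M
    have hmem1 : KExtAux.rePoly (KExtAux.PolyDet dA dB d k M)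
        ∈ ⋃ M' : ℕ, ({KExtAux.rePoly (KExtAux.PolyDet dA dB d k M'),
          KExtAux.imPoly (KExtAux.PolyDet dA dB d k M')} :
            Set (MvPolynomial (Fin d × (Fin dA × Fin dB) × Bool) ℝ)) :=
      Set.mem_iUnion.mpr ⟨M, Set.mem_insert _ _⟩
    have hmem2 : KExtAux.imPoly (KExtAux.PolyDet dA dB d k M)
        ∈ ⋃ M' : ℕ, ({KExtAux.rePoly (KExtAux.PolyDet dA dB d k M'),
          KExtAux.imPoly (KExtAux.PolyDet dA dB d k M')} :
            Set (MvPolynomial (Fin d × (Fin dA × Fin dB) × Bool) ℝ)) :=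
      Set.mem_iUnion.mpr ⟨M, Set.mem_insert_of_mem _ rfl⟩
    have h0 := (KExtAux.eval_zero_iff (KExtAux.PolyDet dA dB d k M) (realCoords v)).mpr
      ⟨h _ hmem1, h _ hmem2⟩
    rw [hcoord, KExtAux.eval_PolyDet v M] at h0
    exact h0
  · intro h p hp
    obtain ⟨M, hM⟩ := Set.mem_iUnion.mp hp
    have h0 : MvPolynomial.eval (KExtAux.coordC v) (KExtAux.PolyDet dA dB d k M) = 0 := by
      rw [KExtAux.eval_PolyDet v M]
      exact h M
    rw [← hcoord] at h0
    have hsplit := (KExtAux.eval_zero_iff (KExtAux.PolyDet dA dB d k M) (realCoords v)).mp h0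
    rcases hM with rfl | hM
    · exact hsplit.1
    · rw [Set.mem_singleton_iff] at hM
      rw [hM]
      exact hsplit.2
end

section
/- Let {R_i} be a finite set of rank-one matrices in the space of a1×b1 complex matrices such that no nonzero matrix of rank at most 1 is Frobenius-orthogonal to every R_i (an unextendible product basis), and let {T_j} be a finite set of rank-one a2×b2 complex matrices with the same property. Then the set of Kronecker products {R_i ⊗ T_j} (rank-one matrices of size a1·a2 × b1·b2) again has the property that no nonzero matrix of rank at most 1 is Frobenius-orthogonal to every R_i ⊗ T_j; that is, the tensor product of two unextendible product bases is an unextendible product basis. -/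
open Matrix

noncomputable section

/-- A family of matrices is an unextendible product basis (for the property that
matters here) if no nonzero matrix of rank at most one — equivalently, no outer
product `u vᵀ` with `u ≠ 0` and `v ≠ 0` — is Frobenius-orthogonal to every member
of the family. -/
def IsUPB {α β ι : Type*} [Fintype α] [Fintype β] (R : ι → Matrix α β ℂ) : Prop :=
  ∀ (u : α → ℂ) (v : β → ℂ), u ≠ 0 → v ≠ 0 →
    ∃ i, frobInner (R i) (Matrix.vecMulVec u v) ≠ 0

lemma rank_one_decomp {m n : Type*} [Fintype m] [Fintype n] [DecidableEq n]
    (M : Matrix m n ℂ) (h : M.rank = 1) : ∃ a b, M = Matrix.vecMulVec a b := by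
  rw [Matrix.rank] at h
  obtain ⟨v₀, hv₀, hspan⟩ := finrank_eq_one_iff'.mp h
  refine ⟨(v₀ : m → ℂ), fun s => Classical.choose (hspan ⟨M.mulVec (Pi.single s 1),
    LinearMap.mem_range_self _ _⟩), ?_⟩
  ext p s
  have hc := Classical.choose_spec (hspan ⟨M.mulVec (Pi.single s 1),
    LinearMap.mem_range_self _ _⟩)
  have : (Classical.choose (hspan ⟨M.mulVec (Pi.single s 1),
      LinearMap.mem_range_self _ _⟩)) • (v₀ : m → ℂ) = M.mulVec (Pi.single s 1) :=
    congrArg Subtype.val hc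
  have h2 := congrFun this p
  simp only [Pi.smul_apply, smul_eq_mul] at h2
  have h3 : M.mulVec (Pi.single s 1) p = M p s := by
    simp [Matrix.mulVec_single]
  rw [h3] at h2
  rw [Matrix.vecMulVec_apply, mul_comm]
  exact h2.symm

lemma frob_kron_eq {a₁ b₁ a₂ b₂ : ℕ}
    (a : Fin a₁ → ℂ) (b : Fin b₁ → ℂ) (T : Matrix (Fin a₂) (Fin b₂) ℂ)
    (u : Fin a₁ × Fin a₂ → ℂ) (v : Fin b₁ × Fin b₂ → ℂ) :
    frobInner (Matrix.kroneckerMap (· * ·) (Matrix.vecMulVec a b) T)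
        (Matrix.vecMulVec u v)
      = frobInner T (Matrix.vecMulVec
          (fun q => ∑ p, (starRingEnd ℂ) (a p) * u (p, q))
          (fun t => ∑ s, (starRingEnd ℂ) (b s) * v (s, t))) := by
  simp only [frobInner, Matrix.trace, Matrix.diag, Matrix.mul_apply,
    Matrix.conjTranspose_apply, Matrix.kroneckerMap_apply, Matrix.vecMulVec_apply,
    Fintype.sum_prod_type, Finset.mul_sum, Finset.sum_mul, map_sum]
  rw [Finset.sum_comm]
  refine Finset.sum_congr rfl fun t _ => ?_
  refine Eq.trans (Finset.sum_congr rfl fun s _ => Finset.sum_comm)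
    (Eq.trans Finset.sum_comm ?_)
  refine Finset.sum_congr rfl fun q _ => Finset.sum_congr rfl fun s _ =>
    Finset.sum_congr rfl fun p _ => ?_
  simp only [star_mul', Complex.star_def]
  ring

/-- **The tensor product of two unextendible product bases is an unextendible
product basis (Lemma 6 of the paper).** -/
theorem tensor_of_UPBs_is_UPB
    {a₁ b₁ a₂ b₂ r₁ r₂ : ℕ}
    (R : Fin r₁ → Matrix (Fin a₁) (Fin b₁) ℂ) (T : Fin r₂ → Matrix (Fin a₂) (Fin b₂) ℂ)
    (hRrank : ∀ i, (R i).rank = 1) (hTrank : ∀ j, (T j).rank = 1)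
    (hR : IsUPB R) (hT : IsUPB T) :
    IsUPB (fun ij : Fin r₁ × Fin r₂ =>
      Matrix.kroneckerMap (· * ·) (R ij.1) (T ij.2)) := by
  intro u v hu hv
  -- pick nonzero entries of u and v
  obtain ⟨⟨p₀, q₀⟩, hpq⟩ : ∃ x, u x ≠ 0 := by
    by_contra h
    push_neg at h
    exact hu (funext h)
  obtain ⟨⟨s₀, t₀⟩, hst⟩ : ∃ x, v x ≠ 0 := by
    by_contra h
    push_neg at h
    exact hv (funext h)
  -- apply hR to the slices u(·,q₀), v(·,t₀)
  obtain ⟨i, hi⟩ := hR (fun p => u (p, q₀)) (fun s => v (s, t₀))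
    (fun h => hpq (congrFun h p₀)) (fun h => hst (congrFun h s₀))
  obtain ⟨a, b, hab⟩ := rank_one_decomp (R i) (hRrank i)
  -- compute frobInner (R i) (vecMulVec ...) as a product
  have hfactor : frobInner (R i) (Matrix.vecMulVec (fun p => u (p, q₀)) (fun s => v (s, t₀)))
      = (∑ p, (starRingEnd ℂ) (a p) * u (p, q₀)) * (∑ s, (starRingEnd ℂ) (b s) * v (s, t₀)) := by
    rw [hab]
    simp only [frobInner, Matrix.trace, Matrix.diag, Matrix.mul_apply,
      Matrix.conjTranspose_apply, Matrix.vecMulVec_apply,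
      Finset.sum_mul, Finset.mul_sum]
    refine Finset.sum_congr rfl fun s _ => Finset.sum_congr rfl fun p _ => ?_
    simp only [star_mul', Complex.star_def]
    ring
  rw [hfactor] at hi
  set x : Fin a₂ → ℂ := fun q => ∑ p, (starRingEnd ℂ) (a p) * u (p, q) with hx
  set y : Fin b₂ → ℂ := fun t => ∑ s, (starRingEnd ℂ) (b s) * v (s, t) with hy
  have hx0 : x ≠ 0 := fun h => hi (by simp [mul_eq_zero]; left; exact congrFun h q₀)
  have hy0 : y ≠ 0 := fun h => hi (by simp [mul_eq_zero]; right; exact congrFun h t₀)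
  obtain ⟨j, hj⟩ := hT x y hx0 hy0
  refine ⟨(i, j), ?_⟩
  simpa using (hab ▸ (frob_kron_eq a b (T j) u v)) ▸ hj
end
end
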